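/- arXiv:math/0405155 — 7 statements merged into one kernel-verified Lean document; each statement's English description precedes it below -/
import Mathlib

section
/- The set of regular Hasse–Schmidt derivations on the exterior algebra ⋀M (those D_t whose zeroth component D₀ is an A-automorphism of ⋀M) forms a group under composition; in particular, the formal inverse E_t of a regular Hasse–Schmidt derivation D_t is again a Hasse–Schmidt derivation. -/
noncomputable section

variable (A : Type*) [CommRing A] [IsDomain A] (M : Type*) [AddCommGroup M] [Module A M]

/-- A Hasse–Schmidt derivation on `⋀M`, given by its family of coefficients
`D_i : ⋀M → ⋀M` : the series `D_t = ∑ D_i t^i` is an `A`-algebra homomorphism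
`⋀M → (⋀M)[[t]]`, i.e. each `D_i` is `A`-linear, `D_t(α∧β) = D_t(α)∧D_t(β)`
coefficientwise, and `D_t(1) = 1`. -/
def IsHS (D : ℕ → Module.End A (ExteriorAlgebra A M)) : Prop :=
  (∀ (i : ℕ) (α β : ExteriorAlgebra A M),
      D i (α * β) = ∑ p ∈ Finset.HasAntidiagonal.antidiagonal i, D p.1 α * D p.2 β) ∧
  D 0 (1 : ExteriorAlgebra A M) = 1 ∧ (∀ i, 1 ≤ i → D i (1 : ExteriorAlgebra A M) = 0)

/-- A Hasse–Schmidt derivation is regular if its zeroth component is an automorphism. -/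
def IsReg (D : ℕ → Module.End A (ExteriorAlgebra A M)) : Prop :=
  Function.Bijective (D 0)

/-- Composition of Hasse–Schmidt derivations: the coefficients of `D_t ∘ D'_t`. -/
def compHS (D D' : ℕ → Module.End A (ExteriorAlgebra A M)) :
    ℕ → Module.End A (ExteriorAlgebra A M) :=
  fun i => ∑ p ∈ Finset.HasAntidiagonal.antidiagonal i, D p.1 ∘ₗ D' p.2

/-- The identity Hasse–Schmidt derivation (`D_t = id`). -/
def idHS : ℕ → Module.End A (ExteriorAlgebra A M) :=
  fun i => if i = 0 then LinearMap.id else 0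

open Finset

/-- Rearrangement of a quadruple convolution sum. -/
lemma quadSum {β : Type*} [NonUnitalNonAssocSemiring β] (F G : ℕ → ℕ → β) (i : ℕ) :
    ∑ ab ∈ antidiagonal i, ∑ pq ∈ antidiagonal ab.2, ∑ cd ∈ antidiagonal ab.1,
      F cd.1 pq.1 * G cd.2 pq.2
    = ∑ mn ∈ antidiagonal i, (∑ cp ∈ antidiagonal mn.1, F cp.1 cp.2) *
        (∑ dq ∈ antidiagonal mn.2, G dq.1 dq.2) := by
  have hrhs : ∀ mn : ℕ × ℕ, (∑ cp ∈ antidiagonal mn.1, F cp.1 cp.2) *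
      (∑ dq ∈ antidiagonal mn.2, G dq.1 dq.2)
      = ∑ z ∈ antidiagonal mn.1 ×ˢ antidiagonal mn.2, F z.1.1 z.1.2 * G z.2.1 z.2.2 := by
    intro mn
    rw [Finset.sum_mul_sum, Finset.sum_product]
  have hlhs : ∀ ab : ℕ × ℕ, (∑ pq ∈ antidiagonal ab.2, ∑ cd ∈ antidiagonal ab.1,
      F cd.1 pq.1 * G cd.2 pq.2)
      = ∑ z ∈ antidiagonal ab.2 ×ˢ antidiagonal ab.1, F z.2.1 z.1.1 * G z.2.2 z.1.2 := by
    intro ab; rw [Finset.sum_product]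
  simp only [hrhs, hlhs]
  rw [Finset.sum_sigma', Finset.sum_sigma']
  refine Finset.sum_nbij'
    (fun x => ⟨(x.2.2.1 + x.2.1.1, x.2.2.2 + x.2.1.2), ((x.2.2.1, x.2.1.1), (x.2.2.2, x.2.1.2))⟩)
    (fun x => ⟨(x.2.1.1 + x.2.2.1, x.2.1.2 + x.2.2.2), ((x.2.1.2, x.2.2.2), (x.2.1.1, x.2.2.1))⟩)
    ?_ ?_ ?_ ?_ ?_
  · rintro ⟨⟨a,b⟩, ⟨p,q⟩, ⟨c,d⟩⟩ h
    simp only [Finset.mem_sigma, Finset.mem_product, Finset.HasAntidiagonal.mem_antidiagonal] at h ⊢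
    exact ⟨by omega, trivial, trivial⟩
  · rintro ⟨⟨m,n⟩, ⟨c,p⟩, ⟨d,q⟩⟩ h
    simp only [Finset.mem_sigma, Finset.mem_product, Finset.HasAntidiagonal.mem_antidiagonal] at h ⊢
    exact ⟨by omega, trivial, trivial⟩
  · rintro ⟨⟨a,b⟩, ⟨p,q⟩, ⟨c,d⟩⟩ h
    simp only [Finset.mem_sigma, Finset.mem_product, Finset.HasAntidiagonal.mem_antidiagonal] at h
    obtain ⟨h1, h2, h3⟩ := h
    subst h2 h3
    rfl
  · rintro ⟨⟨m,n⟩, ⟨c,p⟩, ⟨d,q⟩⟩ h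
    simp only [Finset.mem_sigma, Finset.mem_product, Finset.HasAntidiagonal.mem_antidiagonal] at h
    obtain ⟨h1, h2, h3⟩ := h
    subst h2 h3
    rfl
  · rintro ⟨⟨a,b⟩, ⟨p,q⟩, ⟨c,d⟩⟩ h
    rfl

/-- Left-inverse coefficients: `D_t * invL D V = 1` when `D 0 * V = 1`. -/
def invL {R : Type*} [Ring R] (D : ℕ → R) (V : R) : ℕ → R
  | 0 => V
  | n+1 => -(V * ∑ k ∈ Finset.range (n+1), D (k+1) * invL D V (n-k))
termination_by n => n
decreasing_by omega

/-- Right-inverse coefficients: `invR D V * D_t = 1` when `V * D 0 = 1`. -/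
def invR {R : Type*} [Ring R] (D : ℕ → R) (V : R) : ℕ → R
  | 0 => V
  | n+1 => -((∑ k ∈ Finset.range (n+1), invR D V (n-k) * D (k+1)) * V)
termination_by n => n
decreasing_by omega

lemma invL_spec {R : Type*} [Ring R] (D : ℕ → R) (V : R) (hV : D 0 * V = 1) (n : ℕ) :
    ∑ p ∈ antidiagonal n, D p.1 * invL D V p.2 = if n = 0 then 1 else 0 := by
  cases n with
  | zero => simp [invL, hV]
  | succ n =>
    rw [Finset.Nat.antidiagonal_succ, Finset.sum_cons, Finset.sum_map]
    simp only [Function.Embedding.coe_prodMap, Function.Embedding.coeFn_mk,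
      Function.Embedding.refl_apply, Prod.map_fst, Prod.map_snd]
    rw [Finset.Nat.sum_antidiagonal_eq_sum_range_succ_mk]
    rw [show invL D V (n+1) = -(V * ∑ k ∈ Finset.range (n+1), D (k+1) * invL D V (n-k))
      from by rw [invL]]
    rw [mul_neg, ← mul_assoc, hV, one_mul, neg_add_cancel, if_neg (Nat.succ_ne_zero n)]

lemma invR_spec {R : Type*} [Ring R] (D : ℕ → R) (V : R) (hV : V * D 0 = 1) (n : ℕ) :
    ∑ p ∈ antidiagonal n, invR D V p.1 * D p.2 = if n = 0 then 1 else 0 := by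
  cases n with
  | zero => simp [invR, hV]
  | succ n =>
    rw [Finset.Nat.antidiagonal_succ', Finset.sum_cons, Finset.sum_map]
    simp only [Function.Embedding.coe_prodMap, Function.Embedding.coeFn_mk,
      Function.Embedding.refl_apply, Prod.map_fst, Prod.map_snd]
    rw [Finset.Nat.sum_antidiagonal_eq_sum_range_succ_mk]
    rw [show invR D V (n+1) = -((∑ k ∈ Finset.range (n+1), invR D V (n-k) * D (k+1)) * V)
      from by rw [invR]]
    have hre : ∑ k ∈ Finset.range (n+1), invR D V (n-k) * D (k+1)
        = ∑ k ∈ Finset.range (n+1), invR D V k * D (n-k+1) := by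
      rw [← Finset.sum_range_reflect (fun k => invR D V k * D (n-k+1)) (n+1)]
      refine Finset.sum_congr rfl fun j hj => ?_
      rw [Finset.mem_range] at hj
      congr 2
      all_goals omega
    rw [hre, neg_mul, mul_assoc, hV, mul_one]
    simp only [Nat.succ_eq_add_one]
    rw [neg_add_cancel, if_neg (Nat.succ_ne_zero n)]

lemma compHS_apply (D D' : ℕ → Module.End A (ExteriorAlgebra A M)) (i : ℕ)
    (x : ExteriorAlgebra A M) :
    compHS A M D D' i x = ∑ p ∈ antidiagonal i, D p.1 (D' p.2 x) := by
  simp [compHS]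

lemma idHS_apply (i : ℕ) (x : ExteriorAlgebra A M) :
    idHS A M i x = if i = 0 then x else 0 := by
  unfold idHS
  split
  · rfl
  · rfl

lemma idsum {β : Type*} [NonUnitalNonAssocSemiring β] (x y : β) (i : ℕ) :
    ∑ mn ∈ antidiagonal i, (if mn.1 = 0 then x else 0) * (if mn.2 = 0 then y else 0)
      = if i = 0 then x * y else 0 := by
  cases i with
  | zero => simp
  | succ n =>
    rw [if_neg (Nat.succ_ne_zero n)]
    refine Finset.sum_eq_zero fun mn hmn => ?_
    rw [HasAntidiagonal.mem_antidiagonal] at hmn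
    rcases eq_or_ne mn.1 0 with h1 | h1
    · rw [if_neg (show mn.2 ≠ 0 by omega), mul_zero]
    · rw [if_neg h1, zero_mul]

lemma vanish (D : ℕ → Module.End A (ExteriorAlgebra A M)) (hinj : Function.Injective (D 0))
    (f : ℕ → ExteriorAlgebra A M)
    (h : ∀ i, ∑ p ∈ antidiagonal i, D p.1 (f p.2) = 0) : ∀ i, f i = 0 := by
  intro i
  induction i using Nat.strong_induction_on with
  | _ i ih =>
    have h0 := h i
    rw [Finset.sum_eq_single (0, i)] at h0
    · exact hinj (h0.trans (map_zero (D 0)).symm)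
    · intro b hb hne
      rw [HasAntidiagonal.mem_antidiagonal] at hb
      have hb2 : b.2 < i := by
        rcases Nat.lt_or_ge b.2 i with h' | h'
        · exact h'
        · exfalso
          exact hne (Prod.ext (by omega) (by omega))
      rw [ih b.2 hb2, map_zero]
    · intro habs
      exact absurd (by simp [HasAntidiagonal.mem_antidiagonal]) habs

lemma comp_isHS (D D' : ℕ → Module.End A (ExteriorAlgebra A M))
    (hD : IsHS A M D) (hD' : IsHS A M D') : IsHS A M (compHS A M D D') := by
  obtain ⟨hDm, hD1, hD0⟩ := hD
  obtain ⟨hD'm, hD'1, hD'0⟩ := hD'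
  refine ⟨?_, ?_, ?_⟩
  · intro i x y
    rw [compHS_apply]
    calc ∑ p ∈ antidiagonal i, D p.1 (D' p.2 (x*y))
        = ∑ ab ∈ antidiagonal i, ∑ pq ∈ antidiagonal ab.2, ∑ cd ∈ antidiagonal ab.1,
            D cd.1 (D' pq.1 x) * D cd.2 (D' pq.2 y) := by
          refine Finset.sum_congr rfl fun ab _ => ?_
          rw [hD'm, map_sum]
          exact Finset.sum_congr rfl fun pq _ => hDm _ _ _
      _ = ∑ mn ∈ antidiagonal i, (∑ cp ∈ antidiagonal mn.1, D cp.1 (D' cp.2 x)) *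
            (∑ dq ∈ antidiagonal mn.2, D dq.1 (D' dq.2 y)) :=
          quadSum (fun c p => D c (D' p x)) (fun d q => D d (D' q y)) i
      _ = ∑ p ∈ antidiagonal i, compHS A M D D' p.1 x * compHS A M D D' p.2 y := by
          refine Finset.sum_congr rfl fun mn _ => ?_
          rw [compHS_apply, compHS_apply]
  · rw [compHS_apply]
    simp [hD'1, hD1]
  · intro i hi
    rw [compHS_apply, Finset.sum_eq_single (i, 0)]
    · rw [hD'1]
      exact hD0 i hi
    · intro b hb hne
      rw [HasAntidiagonal.mem_antidiagonal] at hb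
      have hb2 : 1 ≤ b.2 := by
        rcases Nat.eq_zero_or_pos b.2 with h0 | h0
        · exact absurd (Prod.ext (by omega) h0) hne
        · exact h0
      rw [hD'0 b.2 hb2, map_zero]
    · intro habs
      exact absurd (by simp [HasAntidiagonal.mem_antidiagonal]) habs

set_option maxHeartbeats 1000000 in
/-- the regular Hasse–Schmidt derivations on `⋀M` form a group under
composition: composition of regular HS-derivations is a regular HS-derivation, the
identity is one, and every regular HS-derivation `D_t` has a two-sided formal inverse
`E_t` which is again a regular Hasse–Schmidt derivation. -/
theorem regular_hasseSchmidt_group :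
    (∀ D D' : ℕ → Module.End A (ExteriorAlgebra A M),
        IsHS A M D → IsReg A M D → IsHS A M D' → IsReg A M D' →
        IsHS A M (compHS A M D D') ∧ IsReg A M (compHS A M D D')) ∧
    (IsHS A M (idHS A M) ∧ IsReg A M (idHS A M)) ∧
    (∀ D : ℕ → Module.End A (ExteriorAlgebra A M), IsHS A M D → IsReg A M D →
        ∃ E : ℕ → Module.End A (ExteriorAlgebra A M),
          IsHS A M E ∧ IsReg A M E ∧
          compHS A M D E = idHS A M ∧ compHS A M E D = idHS A M) := by
  refine ⟨?_, ⟨?_, ?_⟩, ?_⟩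
  · -- composition
    intro D D' hD hDreg hD' hD'reg
    refine ⟨comp_isHS A M D D' hD hD', ?_⟩
    have h0 : compHS A M D D' 0 = D 0 ∘ₗ D' 0 := by
      simp [compHS]
    rw [IsReg, h0]
    rw [LinearMap.coe_comp]
    exact hDreg.comp hD'reg
  · -- id is HS
    refine ⟨?_, ?_, ?_⟩
    · intro i x y
      simp only [idHS_apply]
      exact (idsum x y i).symm
    · simp [idHS_apply]
    · intro i hi
      rw [idHS_apply, if_neg (by omega)]
  · -- id is regular
    rw [IsReg]
    show Function.Bijective (LinearMap.id (R := A) (M := ExteriorAlgebra A M))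
    exact Function.bijective_id
  · -- inverses
    intro D hD hreg
    obtain ⟨hDm, hD1, hD0⟩ := hD
    obtain ⟨V, hVr, hVl⟩ : ∃ V : Module.End A (ExteriorAlgebra A M),
        D 0 * V = 1 ∧ V * D 0 = 1 := by
      refine ⟨(LinearEquiv.ofBijective (D 0) hreg).symm.toLinearMap, ?_, ?_⟩
      · refine LinearMap.ext fun x => ?_
        exact (LinearEquiv.ofBijective (D 0) hreg).apply_symm_apply x
      · refine LinearMap.ext fun x => ?_
        exact (LinearEquiv.ofBijective (D 0) hreg).symm_apply_apply x
    have hVbij : Function.Bijective V := by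
      refine Function.bijective_iff_has_inverse.mpr ⟨D 0, fun x => ?_, fun x => ?_⟩
      · simpa using DFunLike.congr_fun hVr x
      · simpa using DFunLike.congr_fun hVl x
    set E := invL D V with hE
    set F := invR D V with hF
    have hDEc : ∀ n, ∑ p ∈ antidiagonal n, D p.1 * E p.2 = if n = 0 then 1 else 0 :=
      invL_spec D V hVr
    have hFDc : ∀ n, ∑ p ∈ antidiagonal n, F p.1 * D p.2 = if n = 0 then 1 else 0 :=
      invR_spec D V hVl
    -- power series argument : E is also a right inverse
    have hde : PowerSeries.mk D * PowerSeries.mk E = 1 := by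
      refine PowerSeries.ext fun n => ?_
      rw [PowerSeries.coeff_mul, PowerSeries.coeff_one]
      simpa using hDEc n
    have hfd : PowerSeries.mk F * PowerSeries.mk D = 1 := by
      refine PowerSeries.ext fun n => ?_
      rw [PowerSeries.coeff_mul, PowerSeries.coeff_one]
      simpa using hFDc n
    have hEFeq : PowerSeries.mk E = PowerSeries.mk F := by
      calc PowerSeries.mk E = 1 * PowerSeries.mk E := (one_mul _).symm
        _ = (PowerSeries.mk F * PowerSeries.mk D) * PowerSeries.mk E := by rw [hfd]
        _ = PowerSeries.mk F * (PowerSeries.mk D * PowerSeries.mk E) := mul_assoc _ _ _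
        _ = PowerSeries.mk F := by rw [hde, mul_one]
    have hEDc : ∀ n, ∑ p ∈ antidiagonal n, E p.1 * D p.2 = if n = 0 then 1 else 0 := by
      intro n
      have h1 : PowerSeries.mk E * PowerSeries.mk D = 1 := by rw [hEFeq]; exact hfd
      have h2 := congrArg (PowerSeries.coeff n) h1
      rw [PowerSeries.coeff_mul, PowerSeries.coeff_one] at h2
      simpa using h2
    have hDE : compHS A M D E = idHS A M := by
      funext n
      simp only [compHS, idHS, ← Module.End.mul_eq_comp, ← Module.End.one_eq_id]
      exact hDEc n
    have hED : compHS A M E D = idHS A M := by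
      funext n
      simp only [compHS, idHS, ← Module.End.mul_eq_comp, ← Module.End.one_eq_id]
      exact hEDc n
    have hDEapp : ∀ i z, ∑ p ∈ antidiagonal i, D p.1 (E p.2 z) = if i = 0 then z else 0 := by
      intro i z
      have h1 := congrFun hDE i
      have h2 := congrArg (fun (L : Module.End A (ExteriorAlgebra A M)) => L z) h1
      rw [compHS_apply, idHS_apply] at h2
      exact h2
    have hinj : Function.Injective (D 0) := hreg.1
    -- E is multiplicative
    have hEm : ∀ x y i, E i (x * y) - ∑ p ∈ antidiagonal i, E p.1 x * E p.2 y = 0 := by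
      intro x y
      refine vanish A M D hinj _ ?_
      intro i
      simp only [map_sub]
      rw [Finset.sum_sub_distrib]
      have hfirst : ∑ p ∈ antidiagonal i, D p.1 (E p.2 (x * y)) = if i = 0 then x * y else 0 :=
        hDEapp i (x * y)
      have hsecond : ∑ ab ∈ antidiagonal i,
          D ab.1 (∑ pq ∈ antidiagonal ab.2, E pq.1 x * E pq.2 y) = if i = 0 then x * y else 0 := by
        calc ∑ ab ∈ antidiagonal i, D ab.1 (∑ pq ∈ antidiagonal ab.2, E pq.1 x * E pq.2 y)
            = ∑ ab ∈ antidiagonal i, ∑ pq ∈ antidiagonal ab.2, ∑ cd ∈ antidiagonal ab.1,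
                D cd.1 (E pq.1 x) * D cd.2 (E pq.2 y) := by
              refine Finset.sum_congr rfl fun ab _ => ?_
              rw [map_sum]
              exact Finset.sum_congr rfl fun pq _ => hDm _ _ _
          _ = ∑ mn ∈ antidiagonal i, (∑ cp ∈ antidiagonal mn.1, D cp.1 (E cp.2 x)) *
                (∑ dq ∈ antidiagonal mn.2, D dq.1 (E dq.2 y)) :=
              quadSum (fun c p => D c (E p x)) (fun d q => D d (E q y)) i
          _ = ∑ mn ∈ antidiagonal i, (if mn.1 = 0 then x else 0) * (if mn.2 = 0 then y else 0) := by
              refine Finset.sum_congr rfl fun mn _ => ?_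
              rw [hDEapp mn.1 x, hDEapp mn.2 y]
          _ = if i = 0 then x * y else 0 := idsum x y i
      rw [hfirst, hsecond, sub_self]
    -- E preserves 1
    have hEu : ∀ i, E i 1 - (if i = 0 then 1 else 0) = 0 := by
      refine vanish A M D hinj _ ?_
      intro i
      simp only [map_sub]
      rw [Finset.sum_sub_distrib]
      have hfirst : ∑ p ∈ antidiagonal i, D p.1 (E p.2 1) = if i = 0 then 1 else 0 :=
        hDEapp i 1
      have hsecond : ∑ p ∈ antidiagonal i,
          D p.1 (if p.2 = 0 then (1 : ExteriorAlgebra A M) else 0) = if i = 0 then 1 else 0 := by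
        rw [Finset.sum_eq_single (i, 0)]
        · simp only [if_pos rfl]
          cases i with
          | zero => exact hD1
          | succ n =>
            rw [if_neg (Nat.succ_ne_zero n)]
            exact hD0 _ (Nat.succ_le_succ (Nat.zero_le n))
        · intro b hb hne
          rw [HasAntidiagonal.mem_antidiagonal] at hb
          have hb2 : b.2 ≠ 0 := fun h0 => hne (Prod.ext (by omega) h0)
          rw [if_neg hb2, map_zero]
        · intro habs
          exact absurd (by simp [HasAntidiagonal.mem_antidiagonal]) habs
      rw [hfirst, hsecond, sub_self]
    refine ⟨E, ⟨?_, ?_, ?_⟩, ?_, hDE, hED⟩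
    · intro i x y
      exact sub_eq_zero.mp (hEm x y i)
    · have := hEu 0
      rw [if_pos rfl] at this
      exact sub_eq_zero.mp this
    · intro i hi
      have := hEu i
      rw [if_neg (by omega), sub_zero] at this
      exact this
    · rw [IsReg]
      have hE0 : E 0 = V := by rw [hE]; rw [invL]
      rw [hE0]
      exact hVbij

end
end

section
/- Let D_t be the Hasse–Schmidt (Schubert) derivation on ⋀M extending the shift operators D_i(ε^j) = ε^{i+j} on M = ⊕_{i≥1} ℤε^i. Then the components D_i : ⋀^k M → ⋀^k M commute pairwise: D_i D_j = D_j D_i on ⋀^k M for all i, j ≥ 0 and k ≥ 1. -/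
open scoped Classical

noncomputable section

/-- The free ℤ-module `M = ⊕_{i ≥ 1} ℤ ε^i`; the basis vector `ε^i` (i ≥ 1) is
`Finsupp.single (i-1) 1`. -/
abbrev Mmod : Type := ℕ →₀ ℤ

def ee (i : ℕ) : Mmod := Finsupp.single (i - 1) 1

/-- The exterior algebra `⋀ M` over ℤ. -/
abbrev EA : Type := ExteriorAlgebra ℤ Mmod

def eps (i : ℕ) : EA := ExteriorAlgebra.ι ℤ (ee i)

/-- `ε^{i₁} ∧ ⋯ ∧ ε^{i_k}`. -/
def wedge {k : ℕ} (i : Fin k → ℕ) : EA := (List.ofFn fun j => eps (i j)).prod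

/-- `D` is the Schubert derivation on `⋀M`: `D₀ = id`, the generalized Leibniz rule
holds, and `D_i (ε^j) = ε^{i+j}` for `j ≥ 1`. -/
def IsSch (D : ℕ → Module.End ℤ EA) : Prop :=
  (∀ α, D 0 α = α) ∧ (∀ i, 1 ≤ i → D i (1 : EA) = 0) ∧
  (∀ i (α β : EA), D i (α * β) = ∑ p ∈ Finset.HasAntidiagonal.antidiagonal i, D p.1 α * D p.2 β) ∧
  (∀ i j, 1 ≤ j → D i (eps j) = eps (i + j))

/-- the components of the Schubert derivation commute pairwise
(in particular on each `⋀^k M`). -/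
theorem schubert_derivation_components_commute
    (D : ℕ → Module.End ℤ EA) (hD : IsSch D) :
    ∀ (i j : ℕ) (α : EA), D i (D j α) = D j (D i α) := by
  obtain ⟨h0, h1, hmul, heps⟩ := hD
  have hone : ∀ i, D i (1 : EA) = if i = 0 then 1 else 0 := by
    intro i
    rcases Nat.eq_zero_or_pos i with hi | hi
    · simp [hi, h0]
    · simp [Nat.pos_iff_ne_zero.mp hi, h1 i hi]
  suffices h : ∀ (α : EA) (i j : ℕ), D i (D j α) = D j (D i α) by
    intro i j α; exact h α i j
  intro α
  induction α using ExteriorAlgebra.induction with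
  | algebraMap r =>
    intro i j
    have : (algebraMap ℤ EA r) = r • (1 : EA) := by
      rw [Algebra.algebraMap_eq_smul_one]
    rw [this, map_smul, map_smul, map_smul, map_smul, hone, hone]
    rcases Nat.eq_zero_or_pos i with hi | hi <;> rcases Nat.eq_zero_or_pos j with hj | hj
    · simp [hi, hj]
    · simp [hi, Nat.pos_iff_ne_zero.mp hj, h0, h1 j hj]
    · simp [hj, Nat.pos_iff_ne_zero.mp hi, h0, h1 i hi]
    · simp [Nat.pos_iff_ne_zero.mp hi, Nat.pos_iff_ne_zero.mp hj]
  | ι m =>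
    induction m using Finsupp.induction_linear with
    | zero => intro i j; simp
    | add f g hf hg => intro i j; simp [map_add, hf i j, hg i j]
    | single n b =>
      intro i j
      have hs : Finsupp.single n b = b • ee (n + 1) := by
        simp [ee]
      have key : ∀ p : ℕ, D p ((ExteriorAlgebra.ι ℤ) (Finsupp.single n b))
          = b • eps (p + (n + 1)) := by
        intro p
        rw [hs, map_smul, map_smul]
        congr 1
        exact heps p (n + 1) (by omega)
      rw [key, key, map_smul, map_smul]
      congr 1
      rw [heps i (j + (n + 1)) (by omega), heps j (i + (n + 1)) (by omega)]
      congr 1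
      omega
  | mul a b ha hb =>
    intro i j
    have L : D i (D j (a * b)) =
        ∑ p ∈ Finset.HasAntidiagonal.antidiagonal j, ∑ q ∈ Finset.HasAntidiagonal.antidiagonal i,
          D q.1 (D p.1 a) * D q.2 (D p.2 b) := by
      rw [hmul j a b, map_sum]
      exact Finset.sum_congr rfl fun p _ => hmul i _ _
    have R : D j (D i (a * b)) =
        ∑ q ∈ Finset.HasAntidiagonal.antidiagonal i, ∑ p ∈ Finset.HasAntidiagonal.antidiagonal j,
          D p.1 (D q.1 a) * D p.2 (D q.2 b) := by
      rw [hmul i a b, map_sum]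
      exact Finset.sum_congr rfl fun q _ => hmul j _ _
    rw [L, R]
    rw [Finset.sum_comm]
    refine Finset.sum_congr rfl fun q _ => Finset.sum_congr rfl fun p _ => ?_
    rw [ha q.1 p.1, hb q.2 p.2]
  | add a b ha hb =>
    intro i j
    simp [map_add, ha i j, hb i j]
end
end

section
/- Pieri's formula for Schubert derivatives: for 1 ≤ i₁ < i₂ < ⋯ < i_k and h ≥ 0, D_h(ε^{i₁} ∧ ⋯ ∧ ε^{i_k}) = ∑ ε^{j₁} ∧ ⋯ ∧ ε^{j_k}, where the sum ranges over all sequences (j₁,…,j_k) with i₁ ≤ j₁ < i₂ ≤ j₂ < ⋯ < i_k ≤ j_k and j₁ + ⋯ + j_k = h + i₁ + ⋯ + i_k. -/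
open scoped Classical

noncomputable section

/-! ### Auxiliary lemmas -/

def wprod {k : ℕ} (v : Fin k → Mmod) : EA := (List.ofFn fun j => ExteriorAlgebra.ι ℤ (v j)).prod

lemma wedge_eq_wprod {k : ℕ} (i : Fin k → ℕ) : wedge i = wprod (fun j => ee (i j)) := rfl

lemma wprod_succ {k : ℕ} (v : Fin (k+1) → Mmod) :
    wprod v = ExteriorAlgebra.ι ℤ (v 0) * wprod (fun j => v j.succ) := by
  rw [wprod, List.ofFn_succ, List.prod_cons]; rfl

lemma wprod_swap : ∀ (k n : ℕ) (hn : n + 1 < k) (v w : Fin k → Mmod),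
    (∀ j : Fin k, (j:ℕ) ≠ n → (j:ℕ) ≠ n + 1 → w j = v j) →
    w ⟨n, Nat.lt_of_succ_lt hn⟩ = v ⟨n+1, hn⟩ → w ⟨n+1, hn⟩ = v ⟨n, Nat.lt_of_succ_lt hn⟩ →
    wprod w = - wprod v := by
  intro k n
  induction n generalizing k with
  | zero =>
    intro hn v w hj h0 h1
    obtain ⟨k', rfl⟩ : ∃ k', k = k' + 2 := ⟨k - 2, by omega⟩
    rw [wprod_succ, wprod_succ, wprod_succ v, wprod_succ (fun j => v j.succ)]
    have ht : (fun j : Fin k' => w j.succ.succ) = (fun j : Fin k' => v j.succ.succ) := by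
      funext j
      exact hj j.succ.succ (by simp) (by simp [Fin.val_succ])
    have hw0 : w 0 = v 1 := h0
    have hw1 : w (1 : Fin (k'+2)) = v 0 := h1
    have hsq : ExteriorAlgebra.ι ℤ (v 1) * ExteriorAlgebra.ι ℤ (v 0)
        = -(ExteriorAlgebra.ι ℤ (v 0) * ExteriorAlgebra.ι ℤ (v 1)) := by
      have h := ExteriorAlgebra.ι_add_mul_swap (R := ℤ) (v 0) (v 1)
      rw [eq_neg_iff_add_eq_zero, add_comm]
      exact h
    simp only [Fin.succ_zero_eq_one]
    rw [hw0, hw1, ht, ← mul_assoc, ← mul_assoc, hsq, neg_mul]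
  | succ n ih =>
    intro hn v w hj h0 h1
    obtain ⟨k', rfl⟩ : ∃ k', k = k' + 1 := ⟨k - 1, by omega⟩
    rw [wprod_succ, wprod_succ v]
    have hh : w 0 = v 0 := hj 0 (by simp) (by simp)
    rw [hh]
    have := ih k' (by omega) (fun j => v j.succ) (fun j => w j.succ)
      (fun j hj1 hj2 => hj j.succ (by simpa [Fin.val_succ] using fun h => hj1 (by omega))
        (by simp [Fin.val_succ]; omega))
      (by convert h0 using 2 <;> simp [Fin.ext_iff])
      (by convert h1 using 2 <;> simp [Fin.ext_iff])
    rw [this, mul_neg]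

lemma wprod_zero : ∀ (k n : ℕ) (hn : n + 1 < k) (v : Fin k → Mmod),
    v ⟨n, Nat.lt_of_succ_lt hn⟩ = v ⟨n+1, hn⟩ → wprod v = 0 := by
  intro k n
  induction n generalizing k with
  | zero =>
    intro hn v h
    obtain ⟨k', rfl⟩ : ∃ k', k = k' + 2 := ⟨k - 2, by omega⟩
    rw [wprod_succ, wprod_succ (fun j => v j.succ)]
    have h01 : v 0 = v 1 := h
    simp only [Fin.succ_zero_eq_one]
    rw [h01, ← mul_assoc, ExteriorAlgebra.ι_sq_zero, zero_mul]
  | succ n ih =>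
    intro hn v h
    obtain ⟨k', rfl⟩ : ∃ k', k = k' + 1 := ⟨k - 1, by omega⟩
    rw [wprod_succ]
    have := ih k' (by omega) (fun j => v j.succ)
      (by convert h using 2 <;> simp [Fin.ext_iff])
    rw [this, mul_zero]

lemma wedge_succ {k : ℕ} (i : Fin (k+1) → ℕ) :
    wedge i = eps (i 0) * wedge (fun j => i j.succ) := by
  rw [wedge, List.ofFn_succ, List.prod_cons]; rfl

lemma D_wedge_full (D : ℕ → Module.End ℤ EA) (hD : IsSch D) :
    ∀ (k : ℕ) (h : ℕ) (i : Fin k → ℕ), (∀ j, 1 ≤ i j) →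
    D h (wedge i) = ∑ c ∈ Finset.Nat.antidiagonalTuple k h, wedge (fun j => i j + c j) := by
  intro k
  induction k with
  | zero =>
    intro h i hi
    have hw : wedge i = 1 := by simp [wedge]
    rw [hw]
    cases h with
    | zero => simp [Finset.Nat.antidiagonalTuple_zero_zero, hD.1, wedge]
    | succ n => simp [Finset.Nat.antidiagonalTuple_zero_succ, hD.2.1 (n+1) (by omega)]
  | succ k ih =>
    intro h i hi
    rw [wedge_succ, hD.2.2.1]
    have step : ∀ p : ℕ × ℕ, p ∈ Finset.HasAntidiagonal.antidiagonal h →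
        D p.1 (eps (i 0)) * D p.2 (wedge fun j => i j.succ)
        = ∑ c ∈ Finset.Nat.antidiagonalTuple k p.2,
            wedge (fun j : Fin (k+1) => i j + (Fin.cons p.1 c : Fin (k+1) → ℕ) j) := by
      intro p _
      rw [hD.2.2.2 p.1 (i 0) (hi 0), ih p.2 _ (fun j => hi j.succ), Finset.mul_sum]
      refine Finset.sum_congr rfl fun c _ => ?_
      rw [wedge_succ (fun j : Fin (k+1) => i j + (Fin.cons p.1 c : Fin (k+1) → ℕ) j)]
      simp only [Fin.cons_zero, Fin.cons_succ]
      ring_nf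
    rw [Finset.sum_congr rfl step]
    rw [Finset.sum_sigma']
    refine Finset.sum_nbij' (fun x => Fin.cons x.1.1 x.2)
      (fun c => ⟨(c 0, ∑ j : Fin k, c j.succ), fun j => c j.succ⟩) ?_ ?_ ?_ ?_ ?_
    · rintro ⟨⟨a, b⟩, c⟩ hx
      simp only [Finset.mem_sigma, Finset.HasAntidiagonal.mem_antidiagonal,
        Finset.Nat.mem_antidiagonalTuple] at hx ⊢
      rw [Fin.sum_cons, hx.2, hx.1]
    · intro c hc
      simp only [Finset.Nat.mem_antidiagonalTuple, Finset.mem_sigma,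
        Finset.HasAntidiagonal.mem_antidiagonal] at hc ⊢
      refine ⟨?_, ?_⟩
      · rw [← hc, Fin.sum_univ_succ]
      · trivial
    · rintro ⟨⟨a, b⟩, c⟩ hx
      simp only [Finset.mem_sigma, Finset.HasAntidiagonal.mem_antidiagonal,
        Finset.Nat.mem_antidiagonalTuple] at hx
      ext
      · simp
      · simp [Fin.sum_cons, ← hx.2]
      · simp
    · intro c hc
      funext j
      exact Fin.cons_self_tail c ▸ rfl
    · rintro ⟨⟨a, b⟩, c⟩ hx
      rfl

/-! ### The sign-reversing involution -/

def Viol {k : ℕ} (i c : Fin k → ℕ) (n : ℕ) : Prop :=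
  ∃ hn : n + 1 < k, i ⟨n+1, hn⟩ ≤ i ⟨n, Nat.lt_of_succ_lt hn⟩ + c ⟨n, Nat.lt_of_succ_lt hn⟩

def swp {k : ℕ} (i c : Fin k → ℕ) (n : ℕ) (hn : n + 1 < k) : Fin k → ℕ := fun j =>
  if (j : ℕ) = n then i ⟨n+1, hn⟩ + c ⟨n+1, hn⟩ - i ⟨n, Nat.lt_of_succ_lt hn⟩
  else if (j : ℕ) = n + 1 then
    i ⟨n, Nat.lt_of_succ_lt hn⟩ + c ⟨n, Nat.lt_of_succ_lt hn⟩ - i ⟨n+1, hn⟩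
  else c j

def gswap {k : ℕ} (i c : Fin k → ℕ) (hex : ∃ n, Viol i c n) : Fin k → ℕ :=
  swp i c (Nat.find hex) (Nat.find_spec hex).choose

lemma hexOf {k : ℕ} (i c : Fin k → ℕ)
    (h : ¬ ∀ m m' : Fin k, ((m' : ℕ) = (m : ℕ) + 1) → i m + c m < i m') :
    ∃ n, Viol i c n := by
  push_neg at h
  obtain ⟨m, m', hmm, hle⟩ := h
  have hn : (m : ℕ) + 1 < k := by rw [← hmm]; exact m'.isLt
  refine ⟨(m : ℕ), hn, ?_⟩
  have e2 : (⟨(m : ℕ) + 1, hn⟩ : Fin k) = m' := Fin.ext hmm.symm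
  have e1 : (⟨(m : ℕ), Nat.lt_of_succ_lt hn⟩ : Fin k) = m := Fin.ext rfl
  rw [e1, e2]
  exact hle

lemma sum_swap_pair {k : ℕ} (m m' : Fin k) (hne : m ≠ m') (f g : Fin k → ℕ)
    (hoff : ∀ j, j ≠ m → j ≠ m' → f j = g j) (hpair : f m + f m' = g m + g m') :
    ∑ j, f j = ∑ j, g j := by
  have h1 : ∀ u : Fin k → ℕ,
      ∑ j, u j = ((∑ j ∈ (Finset.univ.erase m').erase m, u j) + u m) + u m' := by
    intro u
    rw [← Finset.sum_erase_add Finset.univ u (Finset.mem_univ m'),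
      ← Finset.sum_erase_add _ u (Finset.mem_erase.mpr ⟨hne, Finset.mem_univ m⟩)]
  have hmid : ∑ j ∈ (Finset.univ.erase m').erase m, f j
      = ∑ j ∈ (Finset.univ.erase m').erase m, g j :=
    Finset.sum_congr rfl fun j hj =>
      hoff j (Finset.mem_erase.mp hj).1 (Finset.mem_erase.mp (Finset.mem_erase.mp hj).2).1
  rw [h1 f, h1 g, hmid]
  omega

lemma master {k : ℕ} (i : Fin k → ℕ) (hmono : StrictMono i) (c : Fin k → ℕ)
    (hex : ∃ n, Viol i c n) :
    (∑ j, gswap i c hex j = ∑ j, c j) ∧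
    (¬ ∀ m m' : Fin k, ((m' : ℕ) = (m : ℕ) + 1) → i m + gswap i c hex m < i m') ∧
    (wedge (fun j => i j + gswap i c hex j) = - wedge (fun j => i j + c j)) ∧
    (gswap i c hex = c → wedge (fun j => i j + c j) = 0) ∧
    (∀ hex' : ∃ n, Viol i (gswap i c hex) n, gswap i (gswap i c hex) hex' = c) := by
  obtain ⟨hn, hviol⟩ := Nat.find_spec hex
  set n0 := Nat.find hex with hn0def
  set m : Fin k := ⟨n0, Nat.lt_of_succ_lt hn⟩ with hm
  set m' : Fin k := ⟨n0 + 1, hn⟩ with hm'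
  have hnem : m ≠ m' := by simp [hm, hm', Fin.ext_iff]
  have hlt : i m < i m' := hmono (by simp [hm, hm', Fin.lt_def])
  have hgeq : gswap i c hex = swp i c n0 hn := rfl
  have hgm : gswap i c hex m = i m' + c m' - i m := by
    rw [hgeq]; simp [swp, hm, hm']
  have hgm' : gswap i c hex m' = i m + c m - i m' := by
    rw [hgeq]; simp [swp, hm, hm']
  have hgother : ∀ j : Fin k, (j : ℕ) ≠ n0 → (j : ℕ) ≠ n0 + 1 → gswap i c hex j = c j := by
    intro j h1 h2
    rw [hgeq]; simp [swp, h1, h2]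
  have hviol' : i m' ≤ i m + c m := hviol
  refine ⟨?_, ?_, ?_, ?_, ?_⟩
  · -- sum
    refine sum_swap_pair m m' hnem _ _ ?_ ?_
    · intro j hj1 hj2
      exact hgother j (by simpa [hm, Fin.ext_iff] using hj1) (by simpa [hm', Fin.ext_iff] using hj2)
    · rw [hgm, hgm']; omega
  · -- still violating
    intro hP
    have := hP m m' (by simp [hm, hm'])
    rw [hgm] at this
    omega
  · -- sign reversal
    rw [wedge_eq_wprod, wedge_eq_wprod]
    refine wprod_swap k n0 hn _ _ ?_ ?_ ?_
    · intro j h1 h2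
      rw [hgother j h1 h2]
    · show ee (i m + gswap i c hex m) = ee (i m' + c m')
      rw [hgm]; congr 1; omega
    · show ee (i m' + gswap i c hex m') = ee (i m + c m)
      rw [hgm']; congr 1; omega
  · -- fixed point ⇒ zero
    intro hfix
    have h1 : c m = i m' + c m' - i m := by rw [← hgm, hfix]
    rw [wedge_eq_wprod]
    refine wprod_zero k n0 hn _ ?_
    show ee (i m + c m) = ee (i m' + c m')
    congr 1; omega
  · -- involution
    intro hex'
    have hfind' : Nat.find hex' = n0 := by
      rw [Nat.find_eq_iff]
      constructor
      · exact ⟨hn, by show i m' ≤ i m + gswap i c hex m; rw [hgm]; omega⟩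
      · intro n hnn0 hvn
        obtain ⟨hn', hv'⟩ := hvn
        have heq := hgother ⟨n, Nat.lt_of_succ_lt hn'⟩ (by simpa using hnn0.ne)
          (by simp; omega)
        refine Nat.find_min hex hnn0 ⟨hn', ?_⟩
        rwa [heq] at hv'
    have hrw : ∀ (n1 n2 : ℕ) (h1 : n1 + 1 < k) (h2 : n2 + 1 < k) (d : Fin k → ℕ),
        n1 = n2 → swp i d n1 h1 = swp i d n2 h2 := by
      rintro n1 n2 h1 h2 d rfl; rfl
    have : gswap i (gswap i c hex) hex' = swp i (gswap i c hex) n0 hn :=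
      hrw _ _ _ hn _ hfind'
    rw [this]
    funext j
    by_cases h1 : (j : ℕ) = n0
    · have hjm : j = m := Fin.ext h1
      rw [hjm]
      show (if ((m : Fin k) : ℕ) = n0 then _ else _) = c m
      rw [if_pos (by simp [hm])]
      have : gswap i c hex ⟨n0 + 1, hn⟩ = i m + c m - i m' := hgm'
      rw [this]
      have him : i (⟨n0, Nat.lt_of_succ_lt hn⟩ : Fin k) = i m := rfl
      have him' : i (⟨n0 + 1, hn⟩ : Fin k) = i m' := rfl
      rw [him, him']
      omega
    · by_cases h2 : (j : ℕ) = n0 + 1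
      · have hjm : j = m' := Fin.ext h2
        rw [hjm]
        show (if ((m' : Fin k) : ℕ) = n0 then _ else if ((m' : Fin k) : ℕ) = n0 + 1 then _ else _)
          = c m'
        rw [if_neg (by simp [hm']), if_pos (by simp [hm'])]
        have : gswap i c hex ⟨n0, Nat.lt_of_succ_lt hn⟩ = i m' + c m' - i m := hgm
        rw [this]
        have him : i (⟨n0, Nat.lt_of_succ_lt hn⟩ : Fin k) = i m := rfl
        have him' : i (⟨n0 + 1, hn⟩ : Fin k) = i m' := rfl
        rw [him, him']
        omega
      · show (if (j : ℕ) = n0 then _ else if (j : ℕ) = n0 + 1 then _ else gswap i c hex j) = c j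
        rw [if_neg h1, if_neg h2]
        exact hgother j h1 h2

/-- Pieri's formula for Schubert derivatives. For `1 ≤ i₁ < ⋯ < i_k` and
`h ≥ 0`, `D_h(ε^{i₁} ∧ ⋯ ∧ ε^{i_k}) = ∑ ε^{j₁} ∧ ⋯ ∧ ε^{j_k}`, the sum over all
`(j₁,…,j_k)` with `i₁ ≤ j₁ < i₂ ≤ j₂ < ⋯ < i_k ≤ j_k` and `∑ j_p = h + ∑ i_p`.
(Writing `j_m = i_m + c_m` with `c` ranging over compositions of `h` of length `k`
subject to the interlacing condition `i_m + c_m < i_{m+1}`.) -/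
theorem pieri_for_schubert_derivations
    (D : ℕ → Module.End ℤ EA) (hD : IsSch D)
    (k h : ℕ) (i : Fin k → ℕ) (hmono : StrictMono i) (hi : ∀ j, 1 ≤ i j) :
    D h (wedge i) =
      ∑ c ∈ (Finset.Nat.antidiagonalTuple k h).filter
          (fun c => ∀ m m' : Fin k, ((m' : ℕ) = (m : ℕ) + 1) → i m + c m < i m'),
        wedge (fun j => i j + c j) := by
  rw [D_wedge_full D hD k h i hi,
    ← Finset.sum_filter_add_sum_filter_not (Finset.Nat.antidiagonalTuple k h)
      (fun c => ∀ m m' : Fin k, ((m' : ℕ) = (m : ℕ) + 1) → i m + c m < i m')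
      (fun c => wedge (fun j => i j + c j))]
  have hzero : ∑ c ∈ (Finset.Nat.antidiagonalTuple k h).filter
      (fun c => ¬ ∀ m m' : Fin k, ((m' : ℕ) = (m : ℕ) + 1) → i m + c m < i m'),
      wedge (fun j => i j + c j) = 0 := by
    refine Finset.sum_involution
      (fun c hc => gswap i c (hexOf i c (Finset.mem_filter.mp hc).2)) ?_ ?_ ?_ ?_
    · intro c hc
      have hneg := (master i hmono c (hexOf i c (Finset.mem_filter.mp hc).2)).2.2.1
      rw [hneg]
      exact add_neg_cancel _
    · intro c hc hne
      intro hfix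
      exact hne ((master i hmono c (hexOf i c (Finset.mem_filter.mp hc).2)).2.2.2.1 hfix)
    · intro c hc
      obtain ⟨hc1, hc2⟩ := Finset.mem_filter.mp hc
      have hm := master i hmono c (hexOf i c hc2)
      refine Finset.mem_filter.mpr ⟨?_, hm.2.1⟩
      rw [Finset.Nat.mem_antidiagonalTuple, hm.1]
      exact Finset.Nat.mem_antidiagonalTuple.mp hc1
    · intro c hc
      exact (master i hmono c (hexOf i c (Finset.mem_filter.mp hc).2)).2.2.2.2 _
  rw [hzero, add_zero]

end
end

section
/- The evaluation map E : ℤ[T₁, T₂, …] → ⋀^k M sending P to P(D₁, D₂, …)·(ε^1 ∧ ⋯ ∧ ε^k) is surjective; i.e. ⋀^k M is a principal module over the ring ℤ[D] generated by the components of the Schubert derivation, with generator ε^1 ∧ ⋯ ∧ ε^k. -/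
open scoped Classical

noncomputable section

/-- The `k`-th exterior power `⋀^k M`: the span of all `k`-fold wedges of the `ε^i`. -/
def kPart (k : ℕ) : Submodule ℤ EA :=
  Submodule.span ℤ {y | ∃ i : Fin k → ℕ, (∀ j, 1 ≤ i j) ∧ y = wedge i}

namespace SchAux

variable (D : ℕ → Module.End ℤ EA)

def Dbar : ℕ → Module.End ℤ EA
  | 0 => 1
  | (n+1) => -∑ i ∈ (Finset.range (n+1)).attach, D (n+1-(i:ℕ)) * Dbar (i:ℕ)
  decreasing_by exact Finset.mem_range.mp i.2

lemma Dbar_zero : Dbar D 0 = 1 := by rw [Dbar]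

lemma Dbar_succ (n : ℕ) :
    Dbar D (n+1) = -∑ i ∈ Finset.range (n+1), D (n+1-i) * Dbar D i := by
  rw [Dbar]
  congr 1
  rw [← Finset.sum_attach (Finset.range (n+1)) (fun i => D (n+1-i) * Dbar D i)]

variable {D}

lemma D_zero_apply (hD : IsSch D) (x : EA) : D 0 x = x := hD.1 x

lemma convS (hD : IsSch D) (n : ℕ) (x : EA) :
    ∑ i ∈ Finset.range (n+2), D (n+1-i) (Dbar D i x) = 0 := by
  rw [Finset.sum_range_succ]
  have h1 : n + 1 - (n+1) = 0 := by omega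
  rw [h1, D_zero_apply hD]
  have h2 : Dbar D (n+1) x = -∑ i ∈ Finset.range (n+1), D (n+1-i) (Dbar D i x) := by
    rw [Dbar_succ]
    simp [Module.End.mul_apply]
  rw [h2]; exact add_neg_cancel _

lemma Dbar_mem (n : ℕ) : Dbar D n ∈ Subring.closure (Set.range D) := by
  induction n using Nat.strong_induction_on with
  | _ n ih =>
    match n with
    | 0 => rw [Dbar_zero]; exact Subring.one_mem _
    | (n+1) =>
      rw [Dbar_succ]
      refine neg_mem (Subring.sum_mem _ (fun i hi => mul_mem ?_ (ih i (Finset.mem_range.mp hi))))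
      exact Subring.subset_closure ⟨n+1-i, rfl⟩

lemma Dbar_one (hD : IsSch D) : ∀ n, 1 ≤ n → Dbar D n (1 : EA) = 0 := by
  intro n
  induction n using Nat.strong_induction_on with
  | _ n ih =>
    match n with
    | 0 => intro h; omega
    | (n+1) =>
      intro _
      rw [Dbar_succ]
      simp only [Module.End.mul_apply, LinearMap.neg_apply, LinearMap.sum_apply, neg_eq_zero]
      refine Finset.sum_eq_zero (fun i hi => ?_)
      rcases Nat.eq_zero_or_pos i with h0 | h0
      · subst h0
        rw [Dbar_zero]
        simpa using hD.2.1 (n+1) (by omega)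
      · rw [ih i (Finset.mem_range.mp hi) h0, map_zero]

lemma Dmul_eps (hD : IsSch D) {x : ℕ} (hx : 1 ≤ x) (m : ℕ) (γ : EA) :
    D m (eps x * γ) = ∑ u ∈ Finset.range (m+1), eps (x+u) * D (m-u) γ := by
  rw [hD.2.2.1 m (eps x) γ, Finset.Nat.sum_antidiagonal_eq_sum_range_succ_mk]
  exact Finset.sum_congr rfl fun u _ => by rw [hD.2.2.2 u x hx, Nat.add_comm u x]

/-- `Bsh β n = Dbar (n-1) β`, with `Bsh β 0 = 0`. -/
def Bsh (Dv : ℕ → Module.End ℤ EA) (β : EA) : ℕ → EA := fun n => Nat.casesOn n 0 (fun m => Dbar Dv m β)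

lemma dbar_eps_mul (hD : IsSch D) {x : ℕ} (hx : 1 ≤ x) (β : EA) : ∀ n,
    Dbar D n (eps x * β) = eps x * Dbar D n β - eps (x+1) * Bsh D β n := by
  intro n
  induction n using Nat.strong_induction_on with
  | _ n ih =>
    match n with
    | 0 => simp [Dbar_zero, Bsh]
    | (m+1) =>
      have hstep : ∀ i ∈ Finset.range (m+1),
          D (m+1-i) (Dbar D i (eps x * β)) =
            (∑ u ∈ Finset.range (m+2-i), eps (x+u) * D (m+1-i-u) (Dbar D i β))
            - (∑ u ∈ Finset.range (m+2-i), eps (x+1+u) * D (m+1-i-u) (Bsh D β i)) := by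
        intro i hi
        rw [ih i (Finset.mem_range.mp hi), map_sub, Dmul_eps hD hx, Dmul_eps hD (by omega : 1 ≤ x+1)]
        have h2 : m + 1 - i + 1 = m + 2 - i := by
          have := Finset.mem_range.mp hi; omega
        rw [h2]
      have hL : Dbar D (m+1) (eps x * β)
          = -∑ i ∈ Finset.range (m+1), D (m+1-i) (Dbar D i (eps x * β)) := by
        rw [Dbar_succ]; simp [Module.End.mul_apply]
      rw [hL, Finset.sum_congr rfl hstep]
      -- abbreviation for the common double sum
      set X : ℕ → ℕ → EA := fun u i => eps (x+1+u) * D (m-i-u) (Dbar D i β) with hX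
      -- first double sum
      have hT1 : ∑ i ∈ Finset.range (m+1), ∑ u ∈ Finset.range (m+2-i),
            eps (x+u) * D (m+1-i-u) (Dbar D i β)
          = (∑ i ∈ Finset.range (m+1), ∑ u ∈ Finset.range (m+1-i), X u i)
            + eps x * ∑ i ∈ Finset.range (m+1), D (m+1-i) (Dbar D i β) := by
        rw [Finset.mul_sum, ← Finset.sum_add_distrib]
        refine Finset.sum_congr rfl fun i hi => ?_
        have hi' := Finset.mem_range.mp hi
        have h2 : m + 2 - i = (m+1-i) + 1 := by omega
        rw [h2, Finset.sum_range_succ']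
        congr 1
        refine Finset.sum_congr rfl fun u hu => ?_
        have h3 : m + 1 - i - (u+1) = m - i - u := by omega
        have h4 : x + (u+1) = x + 1 + u := by omega
        rw [h3, h4]
      -- second double sum
      have hT2 : ∑ i ∈ Finset.range (m+1), ∑ u ∈ Finset.range (m+2-i),
            eps (x+1+u) * D (m+1-i-u) (Bsh D β i)
          = (∑ i ∈ Finset.range (m+1), ∑ u ∈ Finset.range (m+1-i), X u i)
            - eps (x+1) * Dbar D m β := by
        rw [Finset.sum_range_succ' (fun i => ∑ u ∈ Finset.range (m+2-i),
              eps (x+1+u) * D (m+1-i-u) (Bsh D β i)) m]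
        have hzero : ∑ u ∈ Finset.range (m+2-0), eps (x+1+u) * D (m+1-0-u) (Bsh D β 0) = 0 := by
          refine Finset.sum_eq_zero fun u _ => ?_
          show eps (x+1+u) * D (m+1-0-u) (0 : EA) = 0
          rw [map_zero, mul_zero]
        rw [hzero, add_zero]
        have hmain : ∀ i ∈ Finset.range m,
            ∑ u ∈ Finset.range (m+2-(i+1)), eps (x+1+u) * D (m+1-(i+1)-u) (Bsh D β (i+1))
            = ∑ u ∈ Finset.range (m+1-i), X u i := by
          intro i hi
          have hi' := Finset.mem_range.mp hi
          have h2 : m + 2 - (i+1) = m + 1 - i := by omega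
          rw [h2]
          refine Finset.sum_congr rfl fun u hu => ?_
          have h3 : m + 1 - (i+1) - u = m - i - u := by omega
          rw [h3]
          rfl
        rw [Finset.sum_congr rfl hmain]
        -- now compare with the full sum over range (m+1)
        rw [Finset.sum_range_succ (fun i => ∑ u ∈ Finset.range (m+1-i), X u i) m]
        have hlast : ∑ u ∈ Finset.range (m+1-m), X u m = eps (x+1) * Dbar D m β := by
          have h4 : m + 1 - m = 1 := by omega
          rw [h4, Finset.sum_range_one, hX]
          show eps (x+1+0) * D (m-m-0) (Dbar D m β) = eps (x+1) * Dbar D m β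
          have h5 : m - m - 0 = 0 := by omega
          rw [h5, D_zero_apply hD, Nat.add_zero]
        rw [hlast]
        abel
      have hconv : ∑ i ∈ Finset.range (m+1), D (m+1-i) (Dbar D i β) = - Dbar D (m+1) β := by
        have h6 : Dbar D (m+1) β = -∑ i ∈ Finset.range (m+1), D (m+1-i) (Dbar D i β) := by
          rw [Dbar_succ]; simp [Module.End.mul_apply]
        rw [h6, neg_neg]
      rw [Finset.sum_sub_distrib, hT1, hT2, hconv, mul_neg]
      have hB : Bsh D β (m+1) = Dbar D m β := rfl
      rw [hB]
      abel

def bt (b : Bool) : ℕ := if b then 1 else 0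

lemma bt_true : bt true = 1 := rfl
lemma bt_false : bt false = 0 := rfl

def SS (k n : ℕ) : Finset (Fin k → Bool) :=
  Finset.univ.filter (fun s => (∑ i, bt (s i)) = n)

lemma SS_zero (k : ℕ) : SS k 0 = {fun _ => false} := by
  ext s
  rw [SS, Finset.mem_filter, Finset.mem_singleton]
  constructor
  · rintro ⟨-, h⟩
    funext i
    have h2 : bt (s i) ≤ ∑ j, bt (s j) :=
      Finset.single_le_sum (f := fun j => bt (s j)) (fun j _ => Nat.zero_le _) (Finset.mem_univ i)
    have hi : bt (s i) = 0 := by omega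
    cases hb : s i
    · rfl
    · rw [hb] at hi; exact absurd hi (by simp [bt])
  · rintro rfl
    exact ⟨Finset.mem_univ _, by simp [bt]⟩

lemma wedge_nil (v : Fin 0 → ℕ) : wedge v = 1 := by simp [wedge]

lemma wedge_cons {k : ℕ} (v : Fin (k+1) → ℕ) :
    wedge v = eps (v 0) * wedge (fun i : Fin k => v i.succ) := by
  rw [wedge, List.ofFn_succ, List.prod_cons]; rfl

lemma dbar_wedge (hD : IsSch D) : ∀ (k : ℕ) (v : Fin k → ℕ), (∀ i, 1 ≤ v i) → ∀ n,
    Dbar D n (wedge v) = (-1:ℤ)^n • ∑ s ∈ SS k n, wedge (fun i => v i + bt (s i)) := by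
  intro k
  induction k with
  | zero =>
    intro v _ n
    rw [wedge_nil]
    match n with
    | 0 =>
      rw [Dbar_zero, SS_zero, Finset.sum_singleton, wedge_nil]
      simp
    | (n+1) =>
      rw [Dbar_one hD (n+1) (by omega)]
      have hSS : SS 0 (n+1) = ∅ := by
        ext s
        simp [SS]
      rw [hSS, Finset.sum_empty, smul_zero]
  | succ k ihk =>
    intro v hv n
    have hcons := wedge_cons v
    set vt : Fin k → ℕ := fun i => v i.succ with hvt
    have hvt1 : ∀ i, 1 ≤ vt i := fun i => hv i.succ
    match n with
    | 0 =>
      rw [Dbar_zero, SS_zero, Finset.sum_singleton]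
      simp only [bt_false, Nat.add_zero, Module.End.one_apply, pow_zero, one_smul]
    | (m+1) =>
      rw [hcons, dbar_eps_mul hD (hv 0)]
      have hB : Bsh D (wedge vt) (m+1) = Dbar D m (wedge vt) := rfl
      rw [hB, ihk vt hvt1 (m+1), ihk vt hvt1 m]
      have SPLIT : ∑ s ∈ SS (k+1) (m+1), wedge (fun i => v i + bt (s i))
          = eps (v 0) * (∑ s ∈ SS k (m+1), wedge (fun i => vt i + bt (s i)))
            + eps (v 0 + 1) * (∑ s ∈ SS k m, wedge (fun i => vt i + bt (s i))) := by
        have hsplit3 : ∀ f : (Fin (k+1) → Bool) → EA, ∑ s : Fin (k+1) → Bool, f s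
            = (∑ t : Fin k → Bool, f (Fin.cons false t))
              + ∑ t : Fin k → Bool, f (Fin.cons true t) := by
          intro f
          rw [Fintype.sum_equiv (Fin.consEquiv (fun _ : Fin (k+1) => Bool)).symm f
              (fun p => f (Fin.cons p.1 p.2))
              (fun s => (congrArg f (Fin.cons_self_tail s)).symm),
            Fintype.sum_prod_type, Fintype.sum_bool, add_comm]
        rw [SS, Finset.sum_filter, hsplit3]
        have hwt : ∀ (b : Bool) (t : Fin k → Bool),
            (∑ i, bt ((Fin.cons b t : Fin (k+1) → Bool) i)) = bt b + ∑ i, bt (t i) := by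
          intro b t
          rw [Fin.sum_univ_succ]
          simp [Fin.cons_zero, Fin.cons_succ]
        have hwedge : ∀ (b : Bool) (t : Fin k → Bool),
            wedge (fun i => v i + bt ((Fin.cons b t : Fin (k+1) → Bool) i))
            = eps (v 0 + bt b) * wedge (fun i => vt i + bt (t i)) := by
          intro b t
          rw [wedge_cons (fun i => v i + bt ((Fin.cons b t : Fin (k+1) → Bool) i))]
          simp [Fin.cons_zero, Fin.cons_succ]
          rfl
        have htrue : (∑ t : Fin k → Bool,
              if (∑ i, bt ((Fin.cons true t : Fin (k+1) → Bool) i)) = m+1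
              then wedge (fun i => v i + bt ((Fin.cons true t : Fin (k+1) → Bool) i)) else 0)
            = eps (v 0 + 1) * (∑ s ∈ SS k m, wedge (fun i => vt i + bt (s i))) := by
          rw [SS, Finset.sum_filter, Finset.mul_sum]
          refine Finset.sum_congr rfl fun t _ => ?_
          rw [hwt, hwedge, bt_true]
          rw [if_congr (by omega : (1 + ∑ i, bt (t i) = m+1) ↔ (∑ i, bt (t i) = m)) rfl rfl]
          split <;> simp
        have hfalse : (∑ t : Fin k → Bool,
              if (∑ i, bt ((Fin.cons false t : Fin (k+1) → Bool) i)) = m+1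
              then wedge (fun i => v i + bt ((Fin.cons false t : Fin (k+1) → Bool) i)) else 0)
            = eps (v 0) * (∑ s ∈ SS k (m+1), wedge (fun i => vt i + bt (s i))) := by
          rw [SS, Finset.sum_filter, Finset.mul_sum]
          refine Finset.sum_congr rfl fun t _ => ?_
          rw [hwt, hwedge, bt_false]
          rw [if_congr (by omega : (0 + ∑ i, bt (t i) = m+1) ↔ (∑ i, bt (t i) = m+1)) rfl rfl]
          split <;> simp
        rw [htrue, hfalse]
      rw [SPLIT, mul_smul_comm, mul_smul_comm, smul_add, sub_eq_add_neg, ← neg_smul]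
      have hs : (-((-1:ℤ)^m)) = (-1:ℤ)^(m+1) := by ring
      rw [hs]

/-! ### The principal submodule and sorting machinery -/

def NN (Dv : ℕ → Module.End ℤ EA) (k : ℕ) : Submodule ℤ EA where
  carrier := {x | ∃ P ∈ Subring.closure (Set.range Dv), P (wedge (fun j : Fin k => (j:ℕ)+1)) = x}
  add_mem' := by rintro a b ⟨P, hP, rfl⟩ ⟨Q, hQ, rfl⟩; exact ⟨P+Q, add_mem hP hQ, rfl⟩
  zero_mem' := ⟨0, zero_mem _, rfl⟩
  smul_mem' := by rintro z x ⟨P, hP, rfl⟩; exact ⟨z • P, zsmul_mem hP z, rfl⟩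

lemma NN_op {Dv : ℕ → Module.End ℤ EA} {k : ℕ} {P : Module.End ℤ EA}
    (hP : P ∈ Subring.closure (Set.range Dv)) {x : EA} (hx : x ∈ NN Dv k) :
    P x ∈ NN Dv k := by
  obtain ⟨Q, hQ, rfl⟩ := hx
  exact ⟨P * Q, mul_mem hP hQ, rfl⟩

lemma eps_sq (x : ℕ) : eps x * eps x = 0 := ExteriorAlgebra.ι_sq_zero _

lemma eps_anticomm (a b : ℕ) : eps a * eps b = -(eps b * eps a) := by
  have h := ExteriorAlgebra.ι_sq_zero (R := ℤ) (ee a + ee b)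
  rw [map_add, add_mul, mul_add, mul_add] at h
  rw [ExteriorAlgebra.ι_sq_zero, ExteriorAlgebra.ι_sq_zero] at h
  rw [zero_add, add_zero] at h
  exact eq_neg_of_add_eq_zero_left h

def wl (l : List ℕ) : EA := (l.map eps).prod

lemma wl_nil : wl [] = 1 := rfl

lemma wl_cons (x : ℕ) (l : List ℕ) : wl (x :: l) = eps x * wl l := by
  simp [wl]

lemma wedge_eq_wl {k : ℕ} (v : Fin k → ℕ) : wedge v = wl (List.ofFn v) := by
  rw [wedge, wl, List.map_ofFn]
  rfl

lemma wl_perm : ∀ {l l' : List ℕ}, l.Perm l' → wl l = wl l' ∨ wl l = -wl l' := by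
  intro l l' h
  induction h with
  | nil => exact Or.inl rfl
  | cons x p ih =>
    rcases ih with h|h
    · exact Or.inl (by rw [wl_cons, wl_cons, h])
    · exact Or.inr (by rw [wl_cons, wl_cons, h, mul_neg])
  | swap x y l =>
    refine Or.inr ?_
    rw [wl_cons, wl_cons, wl_cons, wl_cons, ← mul_assoc, ← mul_assoc,
      eps_anticomm y x, neg_mul]
  | trans p q ih1 ih2 =>
    rcases ih1 with h1|h1 <;> rcases ih2 with h2|h2
    · exact Or.inl (h1.trans h2)
    · exact Or.inr (h1.trans h2)
    · exact Or.inr (by rw [h1, h2])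
    · exact Or.inl (by rw [h1, h2, neg_neg])

lemma sorted_dichotomy : ∀ l : List ℕ, l.Pairwise (· ≤ ·) → wl l = 0 ∨ l.Pairwise (· < ·) := by
  intro l
  induction l with
  | nil => intro _; exact Or.inr (List.Pairwise.nil)
  | cons x t ih =>
    intro hs
    rw [List.pairwise_cons] at hs
    obtain ⟨hx, hts⟩ := hs
    match t with
    | [] => exact Or.inr (by simp)
    | (y :: t') =>
      by_cases hxy : x = y
      · refine Or.inl ?_
        subst hxy
        rw [wl_cons, wl_cons, ← mul_assoc, eps_sq, zero_mul]
      · have hxy' : x < y := lt_of_le_of_ne (hx y (by simp)) hxy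
        rcases ih hts with h0 | hsl
        · exact Or.inl (by rw [wl_cons, h0, mul_zero])
        · refine Or.inr (List.pairwise_cons.mpr ⟨?_, hsl⟩)
          intro z hz
          rcases List.mem_cons.mp hz with rfl | hz'
          · exact hxy'
          · exact lt_trans hxy' (List.pairwise_cons.mp hsl |>.1 z hz')

lemma wedge_adj_zero : ∀ (k : ℕ) (d : Fin k → ℕ) (i : ℕ) (h : i + 1 < k),
    d ⟨i, by omega⟩ = d ⟨i+1, h⟩ → wedge d = 0 := by
  intro k d i
  induction i generalizing k d with
  | zero =>
    intro h heq
    obtain ⟨k', rfl⟩ : ∃ k', k = k' + 2 := ⟨k - 2, by omega⟩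
    rw [wedge_cons d, wedge_cons (fun i => d i.succ), ← mul_assoc]
    have h0 : d 0 = d ⟨0, by omega⟩ := rfl
    have h1 : d (Fin.succ 0) = d ⟨0+1, h⟩ := by congr 1
    rw [h0, h1, ← heq, eps_sq, zero_mul]
  | succ i ihi =>
    intro h heq
    obtain ⟨k', rfl⟩ : ∃ k', k = k' + 1 := ⟨k - 1, by omega⟩
    rw [wedge_cons d]
    have hz : wedge (fun j : Fin k' => d j.succ) = 0 := by
      refine ihi k' (fun j => d j.succ) (by omega) ?_
      show d (Fin.succ ⟨i, by omega⟩) = d (Fin.succ ⟨i+1, by omega⟩)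
      rw [Fin.succ_mk, Fin.succ_mk]
      exact heq
    rw [hz, mul_zero]

/-! ### measure lemmas -/

lemma geo_bound (W : ℕ) : ∀ t, ∑ i ∈ Finset.range t, W * (W+1)^i < (W+1)^t := by
  intro t
  induction t with
  | zero => simp
  | succ t iht =>
    rw [Finset.sum_range_succ]
    have h : (W+1)^(t+1) = (W+1)^t + W * (W+1)^t := by rw [pow_succ]; ring
    omega

lemma filter_sum_lt (W k t : ℕ) (ht : t ≤ k) :
    ∑ i ∈ Finset.range k, (if i < t then W * (W+1)^i else 0) < (W+1)^t := by
  have heq : ∑ i ∈ Finset.range k, (if i < t then W * (W+1)^i else 0)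
      = ∑ i ∈ Finset.range t, W * (W+1)^i := by
    rw [Finset.range_eq_Ico, ← Finset.sum_Ico_consecutive _ (Nat.zero_le t) ht]
    have h1 : ∑ i ∈ Finset.Ico t k, (if i < t then W * (W+1)^i else 0) = 0 :=
      Finset.sum_eq_zero (fun i hi => if_neg (by have := Finset.mem_Ico.mp hi; omega))
    rw [h1, add_zero, ← Finset.range_eq_Ico]
    exact Finset.sum_congr rfl fun i hi => if_pos (Finset.mem_range.mp hi)
  rw [heq]
  exact geo_bound W t

def Msr (W : ℕ) {k : ℕ} (v : Fin k → ℕ) : ℕ := ∑ j, v j * (W+1)^(j:ℕ)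

lemma Msr_lt {k : ℕ} (W : ℕ) (u w : Fin k → ℕ) (hu : ∀ j, u j ≤ W) (t : Fin k)
    (hlt : u t < w t) (hag : ∀ j : Fin k, (t:ℕ) < (j:ℕ) → u j = w j) : Msr W u < Msr W w := by
  have hsplit : ∀ x : Fin k → ℕ, Msr W x =
      (∑ j ∈ Finset.univ.filter (fun j : Fin k => (j:ℕ) < (t:ℕ)), x j * (W+1)^(j:ℕ))
      + x t * (W+1)^(t:ℕ)
      + (∑ j ∈ Finset.univ.filter (fun j : Fin k => (t:ℕ) < (j:ℕ)), x j * (W+1)^(j:ℕ)) := by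
    intro x
    rw [Msr, ← Finset.sum_filter_add_sum_filter_not Finset.univ (fun j : Fin k => (j:ℕ) ≤ (t:ℕ))]
    congr 1
    · have hins : Finset.univ.filter (fun j : Fin k => (j:ℕ) ≤ (t:ℕ))
          = insert t (Finset.univ.filter (fun j : Fin k => (j:ℕ) < (t:ℕ))) := by
        ext j
        simp only [Finset.mem_filter, Finset.mem_univ, true_and, Finset.mem_insert, Fin.ext_iff]
        omega
      rw [hins, Finset.sum_insert (by simp)]
      ring
    · refine Finset.sum_congr ?_ (fun _ _ => rfl)
      ext j
      simp only [Finset.mem_filter, Finset.mem_univ, true_and]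
      omega
  have hC : ∑ j ∈ Finset.univ.filter (fun j : Fin k => (t:ℕ) < (j:ℕ)), u j * (W+1)^(j:ℕ)
      = ∑ j ∈ Finset.univ.filter (fun j : Fin k => (t:ℕ) < (j:ℕ)), w j * (W+1)^(j:ℕ) := by
    refine Finset.sum_congr rfl (fun j hj => ?_)
    rw [hag j (Finset.mem_filter.mp hj).2]
  have hA : ∑ j ∈ Finset.univ.filter (fun j : Fin k => (j:ℕ) < (t:ℕ)), u j * (W+1)^(j:ℕ)
      < (W+1)^(t:ℕ) := by
    have h1 : ∑ j ∈ Finset.univ.filter (fun j : Fin k => (j:ℕ) < (t:ℕ)), u j * (W+1)^(j:ℕ)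
        ≤ ∑ j ∈ Finset.univ.filter (fun j : Fin k => (j:ℕ) < (t:ℕ)), W * (W+1)^(j:ℕ) :=
      Finset.sum_le_sum (fun j _ => Nat.mul_le_mul_right _ (hu j))
    have h2 : ∑ j ∈ Finset.univ.filter (fun j : Fin k => (j:ℕ) < (t:ℕ)), W * (W+1)^(j:ℕ)
        = ∑ i ∈ Finset.range k, (if i < (t:ℕ) then W * (W+1)^i else 0) := by
      rw [Finset.sum_filter]
      exact Fin.sum_univ_eq_sum_range (fun i => if i < (t:ℕ) then W * (W+1)^i else 0) k
    have h3 := filter_sum_lt W k (t:ℕ) (le_of_lt t.isLt)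
    omega
  rw [hsplit u, hsplit w, hC]
  have h4 : u t * (W+1)^(t:ℕ) + (W+1)^(t:ℕ) ≤ w t * (W+1)^(t:ℕ) := by
    have h5 : (u t + 1) * (W+1)^(t:ℕ) ≤ w t * (W+1)^(t:ℕ) :=
      Nat.mul_le_mul_right _ (by omega)
    nlinarith [h5]
  omega

lemma sum_ite_le (t0 : ℕ) : ∀ k : ℕ, t0 ≤ k →
    ∑ i ∈ Finset.range k, (if t0 ≤ i then (1:ℕ) else 0) = k - t0 := by
  intro k
  induction k with
  | zero => intro _; simp
  | succ k ihk =>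
    intro h
    rw [Finset.sum_range_succ]
    rcases Nat.lt_or_ge t0 (k+1) with h1 | h1
    · have h2 : t0 ≤ k := by omega
      rw [ihk h2, if_pos h2]
      omega
    · have h3 : ∑ i ∈ Finset.range k, (if t0 ≤ i then (1:ℕ) else 0) = 0 :=
        Finset.sum_eq_zero (fun i hi => if_neg (by have := Finset.mem_range.mp hi; omega))
      rw [h3, if_neg (by omega)]
      omega

lemma main_sorted (hD : IsSch D) (k : ℕ) :
    ∀ (W MW : ℕ) (v : Fin k → ℕ), StrictMono v → (∀ j, 1 ≤ v j) →
      (∑ j, v j) = W → Msr W v = MW → wedge v ∈ NN D k := by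
  intro W
  induction W using Nat.strong_induction_on with
  | _ W ih1 =>
  intro MW
  induction MW using Nat.strong_induction_on with
  | _ MW ih2 =>
  intro v hmono hge hsum hmsr
  by_cases hbase : ∀ j : Fin k, v j = (j:ℕ) + 1
  · have hv : v = fun j : Fin k => (j:ℕ)+1 := funext hbase
    rw [hv]
    exact ⟨1, one_mem _, rfl⟩
  · have hk : 0 < k := by
      by_contra hk0
      exact hbase (fun j => absurd j.isLt (by omega))
    have hQex : ∃ t : ℕ, t < k ∧ ∀ j : ℕ, t ≤ j → ∀ (hj : j + 1 < k),
        v ⟨j+1, hj⟩ = v ⟨j, by omega⟩ + 1 :=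
      ⟨k-1, by omega, fun j hj hjk => absurd hjk (by omega)⟩
    set t0 := Nat.find hQex with ht0def
    obtain ⟨ht0k, hrun⟩ := Nat.find_spec hQex
    have hmin : ∀ t < t0, ¬(t < k ∧ ∀ j : ℕ, t ≤ j → ∀ (hj : j + 1 < k),
        v ⟨j+1, hj⟩ = v ⟨j, by omega⟩ + 1) := fun t ht => Nat.find_min hQex ht
    have hC : 0 < t0 → ∀ (h1 : t0 < k) (h2 : t0 - 1 < k), v ⟨t0-1, h2⟩ + 2 ≤ v ⟨t0, h1⟩ := by
      intro hpos h1 h2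
      have hnQ := hmin (t0 - 1) (by omega)
      have hB : ¬ ∀ j : ℕ, t0 - 1 ≤ j → ∀ (hj : j + 1 < k),
          v ⟨j+1, hj⟩ = v ⟨j, by omega⟩ + 1 := fun hB => hnQ ⟨by omega, hB⟩
      push_neg at hB
      obtain ⟨j, hj1, hjk, hne⟩ := hB
      have hj2 : j = t0 - 1 := by
        by_contra hjne
        exact hne (hrun j (by omega) hjk)
      subst hj2
      have hlt : v ⟨t0-1, h2⟩ < v ⟨t0-1+1, hjk⟩ := hmono (Fin.mk_lt_mk.mpr (by omega))
      have he : (⟨t0-1+1, hjk⟩ : Fin k) = ⟨t0, h1⟩ := by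
        simp only [Fin.mk.injEq]; omega
      rw [he] at hlt hne
      omega
    have hv0 : t0 = 0 → 2 ≤ v ⟨0, hk⟩ := by
      intro h0
      by_contra hlt
      refine hbase ?_
      have hall : ∀ j : ℕ, ∀ (hj : j < k), v ⟨j, hj⟩ = j + 1 := by
        intro j
        induction j with
        | zero =>
          intro hj
          have h1 : v ⟨0, hj⟩ = v ⟨0, hk⟩ := rfl
          have h2 := hge ⟨0, hj⟩
          omega
        | succ j ihj =>
          intro hj
          have hjk : j < k := by omega
          have h3 := hrun j (by omega) hj
          rw [h3, ihj hjk]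
      intro j
      have h4 := hall (j:ℕ) j.isLt
      have h5 : v ⟨(j:ℕ), j.isLt⟩ = v j := by congr 1
      omega
    set r := k - t0 with hrdef
    have hr1 : 1 ≤ r := by omega
    set c : Fin k → ℕ := fun i => v i - (if t0 ≤ (i:ℕ) then 1 else 0) with hcdef
    set sp : Fin k → Bool := fun i => decide (t0 ≤ (i:ℕ)) with hspdef
    have hbtsp : ∀ i : Fin k, bt (sp i) = if t0 ≤ (i:ℕ) then 1 else 0 := by
      intro i
      by_cases h : t0 ≤ (i:ℕ) <;> simp [hspdef, bt, h]
    have hcv : ∀ i, c i + bt (sp i) = v i := by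
      intro i
      rw [hbtsp]
      have := hge i
      by_cases h : t0 ≤ (i:ℕ) <;> simp only [hcdef, if_pos, if_neg, h, if_true, if_false] <;> omega
    have h2le : ∀ i : Fin k, t0 ≤ (i:ℕ) → 2 ≤ v i := by
      intro i hi
      rcases Nat.eq_zero_or_pos t0 with h0 | hpos
      · have h1 : v ⟨0, hk⟩ ≤ v i := hmono.monotone (by rw [Fin.le_def]; exact Nat.zero_le _)
        have := hv0 h0; omega
      · have h1 : v ⟨t0, ht0k⟩ ≤ v i := hmono.monotone (by rw [Fin.le_def]; exact hi)
        have := hC hpos ht0k (by omega)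
        omega
    have hcval : ∀ i : Fin k, c i = v i - (if t0 ≤ (i:ℕ) then 1 else 0) := fun i => rfl
    have hc1 : ∀ i, 1 ≤ c i := by
      intro i
      rw [hcval]
      by_cases h : t0 ≤ (i:ℕ)
      · have := h2le i h; rw [if_pos h]; omega
      · have := hge i; rw [if_neg h]; omega
    have hcmono : StrictMono c := by
      intro a b hab
      have hvab : v a < v b := hmono hab
      have habn : (a:ℕ) < (b:ℕ) := hab
      rw [hcval a, hcval b]
      by_cases hb : t0 ≤ (b:ℕ)
      · by_cases ha : t0 ≤ (a:ℕ)
        · have h2 := h2le a ha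
          rw [if_pos ha, if_pos hb]; omega
        · have hpos : 0 < t0 := by omega
          have h1 : v a ≤ v ⟨t0 - 1, by omega⟩ := hmono.monotone (by rw [Fin.le_def]; simp; omega)
          have h2 : v ⟨t0, ht0k⟩ ≤ v b := hmono.monotone (by rw [Fin.le_def]; simp; omega)
          have h3 := hC hpos ht0k (by omega)
          rw [if_neg ha, if_pos hb]; omega
      · have ha : ¬ t0 ≤ (a:ℕ) := by omega
        rw [if_neg ha, if_neg hb]; omega
    have hspsum : (∑ i, bt (sp i)) = r := by
      have h1 : (∑ i : Fin k, bt (sp i)) = ∑ i ∈ Finset.range k, (if t0 ≤ i then (1:ℕ) else 0) := by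
        rw [← Fin.sum_univ_eq_sum_range (fun i => if t0 ≤ i then (1:ℕ) else 0) k]
        exact Finset.sum_congr rfl (fun i _ => hbtsp i)
      rw [h1, sum_ite_le t0 k (by omega)]
    have hsp : sp ∈ SS k r := Finset.mem_filter.mpr ⟨Finset.mem_univ _, hspsum⟩
    have hsumc : (∑ j, c j) + r = W := by
      have h1 : (∑ j, (c j + bt (sp j))) = W := by
        rw [← hsum]; exact Finset.sum_congr rfl (fun j _ => hcv j)
      rw [Finset.sum_add_distrib, hspsum] at h1
      exact h1
    have hexp := dbar_wedge hD k c hc1 r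
    have hsum2 : ∑ s ∈ SS k r, wedge (fun i => c i + bt (s i))
        = ((-1:ℤ)^r) • Dbar D r (wedge c) := by
      rw [hexp, smul_smul, ← pow_add, Even.neg_one_pow ⟨r, rfl⟩, one_smul]
    have hwv : wedge (fun i => c i + bt (sp i)) = wedge v := by
      congr 1
      exact funext hcv
    have hkey : wedge v = ((-1:ℤ)^r) • Dbar D r (wedge c)
        - ∑ s ∈ (SS k r).erase sp, wedge (fun i => c i + bt (s i)) := by
      rw [← hsum2, ← Finset.add_sum_erase _ _ hsp, hwv]
      abel
    rw [hkey]
    refine Submodule.sub_mem _ ?_ ?_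
    · refine Submodule.smul_mem _ _ (NN_op (Dbar_mem (D := D) r) ?_)
      exact ih1 ((∑ j, c j)) (by omega) (Msr ((∑ j, c j)) c) c hcmono hc1 rfl rfl
    · refine Submodule.sum_mem _ ?_
      intro s hs
      obtain ⟨hsne, hsmem⟩ := Finset.mem_erase.mp hs
      have hswt : (∑ i, bt (s i)) = r := (Finset.mem_filter.mp hsmem).2
      set d : Fin k → ℕ := fun i => c i + bt (s i) with hddef
      have hdval : ∀ i : Fin k, d i = c i + bt (s i) := fun i => rfl
      have hd1 : ∀ i, 1 ≤ d i := fun i => le_trans (hc1 i) (by rw [hdval]; omega)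
      have hdsum : (∑ j, d j) = W := by
        have h1 : (∑ j, d j) = (∑ j, c j) + (∑ j, bt (s j)) := by
          rw [show (∑ j, d j) = ∑ j, (c j + bt (s j)) from rfl, Finset.sum_add_distrib]
        rw [h1, hswt]
        omega
      have hdmono : Monotone d := by
        intro a b hab
        rcases eq_or_lt_of_le hab with rfl | hab'
        · exact le_refl _
        · have h1 : c a < c b := hcmono hab'
          have h2 : bt (s a) ≤ 1 := by cases hq : s a <;> simp [bt]
          have h3 : (0:ℕ) ≤ bt (s b) := Nat.zero_le _
          rw [hdval, hdval]; omega
      by_cases hdstrict : StrictMono d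
      · -- the colex measure strictly decreases
        have hne2 : (Finset.univ.filter (fun i : Fin k => s i ≠ sp i)).Nonempty := by
          obtain ⟨i, hi⟩ := Function.ne_iff.mp hsne
          exact ⟨i, Finset.mem_filter.mpr ⟨Finset.mem_univ _, hi⟩⟩
        set t := (Finset.univ.filter (fun i : Fin k => s i ≠ sp i)).max' hne2 with htdef
        have hts : s t ≠ sp t :=
          (Finset.mem_filter.mp (Finset.max'_mem _ hne2)).2
        have hagree : ∀ j : Fin k, (t:ℕ) < (j:ℕ) → s j = sp j := by
          intro j hj
          by_contra hjne
          have h1 := Finset.le_max' (Finset.univ.filter (fun i : Fin k => s i ≠ sp i)) j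
            (Finset.mem_filter.mpr ⟨Finset.mem_univ _, hjne⟩)
          rw [Fin.le_def] at h1
          omega
        have hspt : t0 ≤ (t:ℕ) := by
          by_contra hlt'
          have hsptf : sp t = false := by simp [hspdef]; omega
          have hst : s t = true := by
            cases hq : s t
            · exact absurd (hq.trans hsptf.symm) hts
            · rfl
          have hsub : ∑ i ∈ Finset.univ.filter (fun i : Fin k => (t:ℕ) < (i:ℕ)), bt (s i) = r := by
            have he : ∀ i ∈ Finset.univ.filter (fun i : Fin k => (t:ℕ) < (i:ℕ)),
                bt (s i) = bt (sp i) :=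
              fun i hi => by rw [hagree i (Finset.mem_filter.mp hi).2]
            rw [Finset.sum_congr rfl he, ← hspsum]
            refine Finset.sum_subset (Finset.filter_subset _ _) ?_
            intro i _ hni
            have h6 : ¬ (t:ℕ) < (i:ℕ) := by
              intro hcon; exact hni (Finset.mem_filter.mpr ⟨Finset.mem_univ _, hcon⟩)
            rw [hbtsp]
            exact if_neg (by omega)
          have hbig : bt (s t) + ∑ i ∈ Finset.univ.filter (fun i : Fin k => (t:ℕ) < (i:ℕ)), bt (s i)
              ≤ ∑ i, bt (s i) := by
            rw [← Finset.add_sum_erase _ _ (Finset.mem_univ t)]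
            refine Nat.add_le_add_left (Finset.sum_le_sum_of_subset ?_) _
            intro i hi
            have h7 := (Finset.mem_filter.mp hi).2
            refine Finset.mem_erase.mpr ⟨?_, Finset.mem_univ _⟩
            intro hcon
            subst hcon
            omega
          rw [hst, hsub, hswt] at hbig
          simp [bt] at hbig
        have hsptt : sp t = true := by simp [hspdef]; omega
        have hst_false : s t = false := by
          cases hq : s t
          · rfl
          · exact absurd (hq.trans hsptt.symm) hts
        have hdt : d t < v t := by
          have h1 : c t = v t - 1 := by rw [hcval, if_pos hspt]
          have h2 : bt (s t) = 0 := by rw [hst_false]; rfl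
          have h3 := h2le t hspt
          rw [hdval, h1, h2]
          omega
        have hag2 : ∀ j : Fin k, (t:ℕ) < (j:ℕ) → d j = v j := by
          intro j hj
          rw [hdval, hagree j hj]
          exact hcv j
        have hdW : ∀ j, d j ≤ W := by
          intro j
          rw [← hdsum]
          exact Finset.single_le_sum (f := fun j => d j) (fun j _ => Nat.zero_le _) (Finset.mem_univ j)
        have hMlt : Msr W d < MW := by
          rw [← hmsr]
          exact Msr_lt W d v hdW t hdt hag2
        exact ih2 (Msr W d) hMlt d hdstrict hd1 hdsum rfl
      · -- a repeated adjacent entry: the wedge vanishes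
        have hex : ∃ a b : Fin k, a < b ∧ ¬ d a < d b := by
          by_contra hco
          push_neg at hco
          exact hdstrict fun {a b} hab => hco a b hab
        obtain ⟨a, b, hab, hnlt⟩ := hex
        have habn : (a:ℕ) < (b:ℕ) := hab
        have h1 : d a = d b := le_antisymm (hdmono (le_of_lt hab)) (by omega)
        have hin : (a:ℕ) + 1 < k := by have := b.isLt; omega
        have h2 : d ⟨(a:ℕ), by omega⟩ = d a := rfl
        have h3 : d a ≤ d ⟨(a:ℕ)+1, hin⟩ := hdmono (by rw [Fin.le_def]; simp only [Fin.val_mk]; omega)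
        have h4 : d ⟨(a:ℕ)+1, hin⟩ ≤ d b := hdmono (by rw [Fin.le_def]; simp only [Fin.val_mk]; omega)
        have heq : d ⟨(a:ℕ), by omega⟩ = d ⟨(a:ℕ)+1, hin⟩ := by omega
        rw [wedge_adj_zero k d (a:ℕ) hin heq]
        exact Submodule.zero_mem _

lemma wl_mem (hD : IsSch D) (k : ℕ) :
    ∀ l : List ℕ, l.length = k → (∀ x ∈ l, 1 ≤ x) → wl l ∈ NN D k := by
  intro l hlen hpos
  have hperm : (List.insertionSort (· ≤ ·) l).Perm l := List.perm_insertionSort _ l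
  have hsorted : (List.insertionSort (· ≤ ·) l).Pairwise (· ≤ ·) := List.pairwise_insertionSort _ l
  set l' := List.insertionSort (· ≤ ·) l with hl'
  have hmem : wl l' ∈ NN D k := by
    rcases sorted_dichotomy l' hsorted with h0 | hst
    · rw [h0]; exact Submodule.zero_mem _
    · have hlen' : l'.length = k := by rw [hperm.length_eq, hlen]
      have hpos' : ∀ x ∈ l', 1 ≤ x := fun x hx => hpos x (hperm.subset hx)
      set v : Fin k → ℕ := fun j => l'.get (Fin.cast hlen'.symm j) with hvdef
      have hwv : wl l' = wedge v := by
        rw [wedge_eq_wl]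
        congr 1
        apply List.ext_get
        · simp [hlen']
        · intro n h1 h2
          simp [hvdef, List.get_ofFn]
      have hmono2 : StrictMono v := by
        intro a b hab
        have hp := List.pairwise_iff_get.mp hst
        exact hp _ _ (show Fin.cast hlen'.symm a < Fin.cast hlen'.symm b from hab)
      have hge : ∀ j, 1 ≤ v j := by
        intro j
        refine hpos' _ ?_
        rw [hvdef]
        exact List.get_mem _ _
      rw [hwv]
      exact main_sorted hD k (∑ j, v j) (Msr (∑ j, v j) v) v hmono2 hge rfl rfl
  rcases wl_perm hperm.symm with he | he
  · rw [he]; exact hmem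
  · rw [he]; exact Submodule.neg_mem _ hmem

end SchAux

/-- `⋀^k M` is a principal module over the ring `ℤ[D]` generated by the
components of the Schubert derivation, with generator `ε^1 ∧ ⋯ ∧ ε^k`: every element of
`⋀^k M` is `P · (ε^1 ∧ ⋯ ∧ ε^k)` for some `P` in the subring of `End(⋀M)` generated by
the `D_i`. -/
theorem exterior_power_principal_module
    (D : ℕ → Module.End ℤ EA) (hD : IsSch D) (k : ℕ) :
    ∀ x ∈ kPart k, ∃ P ∈ Subring.closure (Set.range D),
      P (wedge (fun j : Fin k => (j : ℕ) + 1)) = x := by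
  intro x hx
  have hle : kPart k ≤ SchAux.NN D k := by
    rw [kPart]
    refine Submodule.span_le.mpr ?_
    rintro y ⟨i, hi, rfl⟩
    rw [SchAux.wedge_eq_wl]
    refine SchAux.wl_mem hD k _ (by simp) ?_
    intro z hz
    obtain ⟨j, rfl⟩ := List.mem_ofFn.mp hz
    exact hi j
  exact hle hx

end
end

section
/- Let E_t = ∑_{i≥0} E_i t^i be the formal inverse of the Schubert derivation D_t on ⋀M (so D_t E_t = id). Then for all h > k, E_h vanishes on ⋀^k M. -/
open scoped Classical

noncomputable section

open Finset

-- triple regrouping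
lemma trip_aux {M : Type*} [AddCommMonoid M] (N : ℕ) (f : ℕ → ℕ → ℕ → M) :
    (∑ p ∈ antidiagonal N, ∑ q ∈ antidiagonal p.2, f p.1 q.1 q.2)
  = ∑ p ∈ antidiagonal N, ∑ q ∈ antidiagonal p.1, f q.1 q.2 p.2 := by
  rw [Finset.sum_sigma', Finset.sum_sigma']
  refine Finset.sum_nbij'
    (fun x => ⟨(x.1.1 + x.2.1, x.2.2), (x.1.1, x.2.1)⟩)
    (fun x => ⟨(x.2.1, x.2.2 + x.1.2), (x.2.2, x.1.2)⟩)
    ?_ ?_ ?_ ?_ ?_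
  · rintro ⟨⟨a,b⟩,⟨c,d⟩⟩ hx
    simp only [Finset.mem_sigma, Finset.HasAntidiagonal.mem_antidiagonal] at hx ⊢
    exact ⟨by omega, trivial⟩
  · rintro ⟨⟨a,b⟩,⟨c,d⟩⟩ hx
    simp only [Finset.mem_sigma, Finset.HasAntidiagonal.mem_antidiagonal] at hx ⊢
    exact ⟨by omega, trivial⟩
  · rintro ⟨⟨a,b⟩,⟨c,d⟩⟩ hx
    simp only [Finset.mem_sigma, Finset.HasAntidiagonal.mem_antidiagonal] at hx
    simp only [Sigma.mk.inj_iff, Prod.mk.injEq, heq_eq_eq]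
    exact ⟨⟨trivial, by omega⟩, trivial⟩
  · rintro ⟨⟨a,b⟩,⟨c,d⟩⟩ hx
    simp only [Finset.mem_sigma, Finset.HasAntidiagonal.mem_antidiagonal] at hx
    simp only [Sigma.mk.inj_iff, Prod.mk.injEq, heq_eq_eq]
    refine ⟨⟨by omega, ?_⟩, ?_⟩ <;> trivial
  · rintro ⟨⟨a,b⟩,⟨c,d⟩⟩ _
    rfl

-- quadruple regrouping
lemma quad_aux {M : Type*} [AddCommMonoid M] (i : ℕ) (F : ℕ → ℕ → ℕ → ℕ → M) :
    (∑ mn ∈ antidiagonal i, ∑ pq ∈ antidiagonal mn.1, ∑ ab ∈ antidiagonal mn.2,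
        F pq.1 pq.2 ab.1 ab.2)
  = ∑ st ∈ antidiagonal i, ∑ pa ∈ antidiagonal st.1, ∑ qb ∈ antidiagonal st.2,
        F pa.1 qb.1 pa.2 qb.2 := by
  have h1 : (∑ pw ∈ antidiagonal i, ∑ qn ∈ antidiagonal pw.2, ∑ ab ∈ antidiagonal qn.2,
        F pw.1 qn.1 ab.1 ab.2)
      = ∑ mn ∈ antidiagonal i, ∑ pq ∈ antidiagonal mn.1, ∑ ab ∈ antidiagonal mn.2,
        F pq.1 pq.2 ab.1 ab.2 :=
    trip_aux i (fun x y z => ∑ ab ∈ antidiagonal z, F x y ab.1 ab.2)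
  have h2 : (∑ pw ∈ antidiagonal i, ∑ at' ∈ antidiagonal pw.2, ∑ qb ∈ antidiagonal at'.2,
        F pw.1 qb.1 at'.1 qb.2)
      = ∑ st ∈ antidiagonal i, ∑ pa ∈ antidiagonal st.1, ∑ qb ∈ antidiagonal st.2,
        F pa.1 qb.1 pa.2 qb.2 :=
    trip_aux i (fun x y z => ∑ qb ∈ antidiagonal z, F x qb.1 y qb.2)
  rw [← h1, ← h2]
  refine Finset.sum_congr rfl ?_
  rintro ⟨p, w⟩ -
  calc (∑ qn ∈ antidiagonal w, ∑ ab ∈ antidiagonal qn.2, F p qn.1 ab.1 ab.2)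
      = ∑ vb ∈ antidiagonal w, ∑ qa ∈ antidiagonal vb.1, F p qa.1 qa.2 vb.2 :=
        trip_aux w (fun q a b => F p q a b)
    _ = ∑ vb ∈ antidiagonal w, ∑ aq ∈ antidiagonal vb.1, F p aq.2 aq.1 vb.2 := by
        refine Finset.sum_congr rfl fun vb _ => ?_
        exact (Finset.Nat.sum_antidiagonal_swap (f := fun x => F p x.1 x.2 vb.2)).symm
    _ = ∑ at' ∈ antidiagonal w, ∑ qb ∈ antidiagonal at'.2, F p qb.1 at'.1 qb.2 :=
        (trip_aux w (fun a q b => F p q a b)).symm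

section withDE

variable (D E : ℕ → Module.End ℤ EA)

lemma Emul (hD : IsSch D)
    (hDE : ∀ (i : ℕ) (α : EA),
      (∑ p ∈ Finset.HasAntidiagonal.antidiagonal i, D p.1 (E p.2 α)) = if i = 0 then α else 0)
    (hED : ∀ (i : ℕ) (α : EA),
      (∑ p ∈ Finset.HasAntidiagonal.antidiagonal i, E p.1 (D p.2 α)) = if i = 0 then α else 0)
    (h : ℕ) (α β : EA) :
    E h (α * β) = ∑ p ∈ antidiagonal h, E p.1 α * E p.2 β := by
  obtain ⟨hD0, hD1, hDleib, hDeps⟩ := hD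
  set S : ℕ → EA := fun n => ∑ ab ∈ antidiagonal n, E ab.1 α * E ab.2 β with hS
  have stepA : ∀ i, (∑ mn ∈ antidiagonal i, D mn.1 (S mn.2)) = if i = 0 then α * β else 0 := by
    intro i
    have e1 : ∀ mn : ℕ × ℕ, D mn.1 (S mn.2)
        = ∑ pq ∈ antidiagonal mn.1, ∑ ab ∈ antidiagonal mn.2,
            D pq.1 (E ab.1 α) * D pq.2 (E ab.2 β) := by
      intro mn
      calc D mn.1 (S mn.2)
          = ∑ ab ∈ antidiagonal mn.2, D mn.1 (E ab.1 α * E ab.2 β) := map_sum _ _ _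
        _ = ∑ ab ∈ antidiagonal mn.2, ∑ pq ∈ antidiagonal mn.1,
              D pq.1 (E ab.1 α) * D pq.2 (E ab.2 β) :=
            Finset.sum_congr rfl fun ab _ => hDleib _ _ _
        _ = ∑ pq ∈ antidiagonal mn.1, ∑ ab ∈ antidiagonal mn.2,
              D pq.1 (E ab.1 α) * D pq.2 (E ab.2 β) := Finset.sum_comm
    calc (∑ mn ∈ antidiagonal i, D mn.1 (S mn.2))
        = ∑ mn ∈ antidiagonal i, ∑ pq ∈ antidiagonal mn.1, ∑ ab ∈ antidiagonal mn.2,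
            D pq.1 (E ab.1 α) * D pq.2 (E ab.2 β) := Finset.sum_congr rfl fun mn _ => e1 mn
      _ = ∑ st ∈ antidiagonal i, ∑ pa ∈ antidiagonal st.1, ∑ qb ∈ antidiagonal st.2,
            D pa.1 (E pa.2 α) * D qb.1 (E qb.2 β) :=
          quad_aux i (fun p q a b => D p (E a α) * D q (E b β))
      _ = ∑ st ∈ antidiagonal i, (∑ pa ∈ antidiagonal st.1, D pa.1 (E pa.2 α))
            * ∑ qb ∈ antidiagonal st.2, D qb.1 (E qb.2 β) := by
          refine Finset.sum_congr rfl fun st _ => ?_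
          rw [Finset.sum_mul_sum]
      _ = ∑ st ∈ antidiagonal i, (if st.1 = 0 then α else 0) * (if st.2 = 0 then β else 0) := by
          refine Finset.sum_congr rfl fun st _ => ?_
          rw [hDE, hDE]
      _ = if i = 0 then α * β else 0 := by
          rcases Nat.eq_zero_or_pos i with hi | hi
          · subst hi; simp
          · rw [if_neg (by omega)]
            apply Finset.sum_eq_zero
            rintro ⟨s, t⟩ hmem
            rw [Finset.HasAntidiagonal.mem_antidiagonal] at hmem
            dsimp only at hmem ⊢
            split_ifs with h1 h2
            · exfalso; omega
            · rw [mul_zero]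
            · rw [zero_mul]
            · rw [zero_mul]
  calc E h (α * β)
      = ∑ ui ∈ antidiagonal h, E ui.1 (if ui.2 = 0 then α * β else 0) := by
        symm
        rw [Finset.sum_eq_single_of_mem (h, 0) (by simp)]
        · simp
        · rintro ⟨u, v⟩ hmem hne
          rw [Finset.HasAntidiagonal.mem_antidiagonal] at hmem
          have hv : v ≠ 0 := by
            rintro rfl
            exact hne (by simp at hmem ⊢; omega)
          rw [if_neg hv, map_zero]
    _ = ∑ ui ∈ antidiagonal h, E ui.1 (∑ mn ∈ antidiagonal ui.2, D mn.1 (S mn.2)) :=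
        Finset.sum_congr rfl fun ui _ => by rw [stepA]
    _ = ∑ ui ∈ antidiagonal h, ∑ mn ∈ antidiagonal ui.2, E ui.1 (D mn.1 (S mn.2)) :=
        Finset.sum_congr rfl fun ui _ => map_sum _ _ _
    _ = ∑ wn ∈ antidiagonal h, ∑ um ∈ antidiagonal wn.1, E um.1 (D um.2 (S wn.2)) :=
        trip_aux h (fun u m n => E u (D m (S n)))
    _ = ∑ wn ∈ antidiagonal h, (if wn.1 = 0 then S wn.2 else 0) :=
        Finset.sum_congr rfl fun wn _ => hED wn.1 (S wn.2)
    _ = S h := by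
        rw [Finset.sum_eq_single_of_mem (0, h) (by simp)]
        · simp
        · rintro ⟨w, n⟩ hmem hne
          rw [Finset.HasAntidiagonal.mem_antidiagonal] at hmem
          have hw : w ≠ 0 := by
            rintro rfl
            exact hne (by simp at hmem ⊢; omega)
          rw [if_neg hw]

end withDE

section withDE2

variable (D E : ℕ → Module.End ℤ EA)

lemma E_zero (hD : IsSch D)
    (hDE : ∀ (i : ℕ) (α : EA),
      (∑ p ∈ Finset.HasAntidiagonal.antidiagonal i, D p.1 (E p.2 α)) = if i = 0 then α else 0)
    (α : EA) : E 0 α = α := by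
  have h0 := hDE 0 α
  rw [Finset.Nat.antidiagonal_zero, Finset.sum_singleton] at h0
  rw [hD.1] at h0
  simpa using h0

lemma E_one_eps (hD : IsSch D)
    (hDE : ∀ (i : ℕ) (α : EA),
      (∑ p ∈ Finset.HasAntidiagonal.antidiagonal i, D p.1 (E p.2 α)) = if i = 0 then α else 0)
    (hED : ∀ (i : ℕ) (α : EA),
      (∑ p ∈ Finset.HasAntidiagonal.antidiagonal i, E p.1 (D p.2 α)) = if i = 0 then α else 0)
    (j : ℕ) (hj : 1 ≤ j) : E 1 (eps j) = -eps (1 + j) := by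
  have h0 := hED 1 (eps j)
  rw [Finset.Nat.sum_antidiagonal_eq_sum_range_succ_mk, Finset.sum_range_succ,
    Finset.sum_range_one] at h0
  simp only [Nat.sub_self, Nat.sub_zero, one_ne_zero, if_false] at h0
  rw [hD.2.2.2 1 j hj, hD.1, E_zero D E hD hDE] at h0
  rw [add_comm] at h0
  exact eq_neg_of_add_eq_zero_left h0

lemma E_eps (hD : IsSch D)
    (hDE : ∀ (i : ℕ) (α : EA),
      (∑ p ∈ Finset.HasAntidiagonal.antidiagonal i, D p.1 (E p.2 α)) = if i = 0 then α else 0)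
    (hED : ∀ (i : ℕ) (α : EA),
      (∑ p ∈ Finset.HasAntidiagonal.antidiagonal i, E p.1 (D p.2 α)) = if i = 0 then α else 0) :
    ∀ a j, 2 ≤ a → 1 ≤ j → E a (eps j) = 0 := by
  intro a
  induction a using Nat.strong_induction_on with
  | _ a IH =>
    intro j ha hj
    obtain ⟨m, rfl⟩ : ∃ m, a = m + 2 := ⟨a - 2, by omega⟩
    have h0 := hED (m + 2) (eps j)
    rw [if_neg (by omega), Finset.Nat.sum_antidiagonal_eq_sum_range_succ_mk] at h0
    have hDe : ∀ u : ℕ, D (m + 2 - u) (eps j) = eps ((m + 2 - u) + j) :=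
      fun u => hD.2.2.2 _ _ hj
    simp only [hDe] at h0
    rw [show (m + 2).succ = m + 1 + 1 + 1 from rfl, Finset.sum_range_succ',
      Finset.sum_range_succ', Finset.sum_range_succ] at h0
    have hT : (∑ x ∈ Finset.range m, E (x + 1 + 1) (eps (m + 2 - (x + 1 + 1) + j))) = 0 :=
      Finset.sum_eq_zero fun x hx => IH (x + 1 + 1) (by have := Finset.mem_range.mp hx; omega) _ (by omega) (by omega)
    rw [hT, zero_add, show m + 2 - (m + 1 + 1) + j = j by omega,
      show m + 2 - (0 + 1) + j = m + 1 + j by omega,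
      show m + 2 - 0 + j = m + 2 + j by omega,
      show (0 : ℕ) + 1 = 1 from rfl] at h0
    rw [E_zero D E hD hDE, E_one_eps D E hD hDE hED (m + 1 + j) (by omega),
      show 1 + (m + 1 + j) = m + 2 + j by omega, neg_add_cancel_right] at h0
    exact h0

lemma E_unit (hD : IsSch D)
    (hED : ∀ (i : ℕ) (α : EA),
      (∑ p ∈ Finset.HasAntidiagonal.antidiagonal i, E p.1 (D p.2 α)) = if i = 0 then α else 0)
    (h : ℕ) (hh : 1 ≤ h) : E h (1 : EA) = 0 := by
  have h0 := hED h 1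
  rw [if_neg (by omega)] at h0
  rw [Finset.sum_eq_single_of_mem (h, 0) (by simp)] at h0
  · rw [hD.1] at h0
    exact h0
  · rintro ⟨u, v⟩ hmem hne
    rw [Finset.HasAntidiagonal.mem_antidiagonal] at hmem
    have hv : 1 ≤ v := by
      rcases Nat.eq_zero_or_pos v with rfl | hv
      · exact absurd (by simp at hmem ⊢; omega) hne
      · exact hv
    rw [hD.2.1 v hv, map_zero]

lemma wedge_vanish (hD : IsSch D)
    (hDE : ∀ (i : ℕ) (α : EA),
      (∑ p ∈ Finset.HasAntidiagonal.antidiagonal i, D p.1 (E p.2 α)) = if i = 0 then α else 0)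
    (hED : ∀ (i : ℕ) (α : EA),
      (∑ p ∈ Finset.HasAntidiagonal.antidiagonal i, E p.1 (D p.2 α)) = if i = 0 then α else 0) :
    ∀ k h, k < h → ∀ i : Fin k → ℕ, (∀ j, 1 ≤ i j) → E h (wedge i) = 0 := by
  intro k
  induction k with
  | zero =>
    intro h hh i _
    have hw : wedge i = 1 := by simp [wedge]
    rw [hw]
    exact E_unit D E hD hED h hh
  | succ k IH =>
    intro h hh i hi
    have hw : wedge i = eps (i 0) * wedge (fun j : Fin k => i j.succ) := by
      simp [wedge, List.ofFn_succ]
    rw [hw, Emul D E hD hDE hED]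
    apply Finset.sum_eq_zero
    rintro ⟨a, b⟩ hm
    rw [Finset.HasAntidiagonal.mem_antidiagonal] at hm
    by_cases hb : k < b
    · rw [IH b hb _ (fun j => hi j.succ), mul_zero]
    · rw [E_eps D E hD hDE hED a (i 0) (by omega) (hi 0), zero_mul]

end withDE2

/-- if `E_t = ∑ E_i t^i` is the formal inverse of the Schubert derivation
`D_t` (so `D_t ∘ E_t = E_t ∘ D_t = id`), then `E_h` vanishes on `⋀^k M` for all `h > k`. -/
theorem inverse_derivation_vanishes_in_high_degree
    (k : ℕ) (D E : ℕ → Module.End ℤ EA) (hD : IsSch D)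
    (hDE : ∀ (i : ℕ) (α : EA),
      (∑ p ∈ Finset.HasAntidiagonal.antidiagonal i, D p.1 (E p.2 α)) = if i = 0 then α else 0)
    (hED : ∀ (i : ℕ) (α : EA),
      (∑ p ∈ Finset.HasAntidiagonal.antidiagonal i, E p.1 (D p.2 α)) = if i = 0 then α else 0) :
    ∀ h, k < h → ∀ x ∈ kPart k, E h x = 0 := by
  intro h hh x hx
  have hx' : x ∈ Submodule.span ℤ {y : EA | ∃ i : Fin k → ℕ, (∀ j, 1 ≤ i j) ∧ y = wedge i} := hx
  refine Submodule.span_induction (p := fun y _ => E h y = 0) ?_ ?_ ?_ ?_ hx'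
  · rintro y ⟨i, hi1, rfl⟩
    exact wedge_vanish D E hD hDE hED k h hh i hi1
  · exact map_zero _
  · intro a b _ _ ha hb
    rw [map_add, ha, hb, add_zero]
  · intro a y _ hy
    rw [map_smul, hy, smul_zero]


end
end

section
/- The ring ℤ[D₁,…,D_k]/(D_{n-k+1},…,D_n) is isomorphic to ℤ[σ₁,…,σ_{n-k}]/(Y_{k+1},…,Y_n), where the Y_i are defined by the formal power series identity (1 + σ₁t + ⋯ + σ_{n-k}t^{n-k})^{-1} = ∑_{i≥0} (−1)^i Y_i t^i, the isomorphism matching σ_i with D_i; i.e. the intersection ring of (⋀^k M_n, D_t) is isomorphic to the Chow ring of the Grassmannian G_k(n). -/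
noncomputable section

open PowerSeries

/-- The power series `1 + X₁ t + ⋯ + X_k t^k` over `ℤ[X₁, …, X_k]` (variable `j : Fin k`
standing for `X_{j+1} = D_{j+1}`). -/
def fSeries (k : ℕ) : PowerSeries (MvPolynomial (Fin k) ℤ) :=
  PowerSeries.mk fun h =>
    if hh : 1 ≤ h ∧ h ≤ k then MvPolynomial.X (⟨h - 1, by omega⟩ : Fin k)
    else if h = 0 then 1 else 0

/-- The coefficients `E_j` of the formal inverse of `∑_h D_h t^h`: `E_j` depends only on
`D₁, …, D_j`, hence is a well-defined polynomial in the variables `X₁, …, X_k` for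
`j ≤ k`. -/
def ESeries (k : ℕ) : PowerSeries (MvPolynomial (Fin k) ℤ) :=
  PowerSeries.invOfUnit (fSeries k) 1

/-- The truncation of `E` keeping only `E_0, …, E_k` (the relations `E_j = 0` for
`j > k` hold on `⋀^k M`). -/
def ETrunc (k : ℕ) : PowerSeries (MvPolynomial (Fin k) ℤ) :=
  PowerSeries.mk fun j =>
    if j ≤ k then PowerSeries.coeff (R := MvPolynomial (Fin k) ℤ) j (ESeries k) else 0

/-- The polynomial expression `δ h = D_h(D₁, …, D_k)` of `D_h` in `D₁, …, D_k`, defined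
as the `h`-th coefficient of the inverse of the truncated series `E_0 + ⋯ + E_k t^k`;
for `h ≤ k` this is just the variable `X_h`, and for `h > k` it implements the recursion
`D_{k+i} = -E₁D_{k+i-1} + ⋯ + (-1)^{k+1}E_k D_i`. -/
def deltaPoly (k h : ℕ) : MvPolynomial (Fin k) ℤ :=
  PowerSeries.coeff (R := MvPolynomial (Fin k) ℤ) h (PowerSeries.invOfUnit (ETrunc k) 1)

/-- The power series `1 + σ₁ t + ⋯ + σ_m t^m` over `ℤ[σ₁, …, σ_m]`. -/
def sigmaSeries (m : ℕ) : PowerSeries (MvPolynomial (Fin m) ℤ) :=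
  PowerSeries.mk fun h =>
    if hh : 1 ≤ h ∧ h ≤ m then MvPolynomial.X (⟨h - 1, by omega⟩ : Fin m)
    else if h = 0 then 1 else 0

/-- `Y_i(σ) ∈ ℤ[σ₁, …, σ_m]`, defined by
`(1 + σ₁t + ⋯ + σ_m t^m)⁻¹ = ∑_{i ≥ 0} (-1)^i Y_i t^i`. -/
def Ypoly (m i : ℕ) : MvPolynomial (Fin m) ℤ :=
  (-1) ^ i * PowerSeries.coeff (R := MvPolynomial (Fin m) ℤ) i
    (PowerSeries.invOfUnit (sigmaSeries m) 1)

namespace Aux16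

variable {R S : Type*} [CommRing R] [CommRing S]

lemma invOfUnit_unique {a b : R⟦X⟧} (ha : constantCoeff a = 1) (h : a * b = 1) :
    b = invOfUnit a 1 := by
  have h2 : a * invOfUnit a 1 = 1 := mul_invOfUnit a 1 (by simpa using ha)
  calc b = b * (a * invOfUnit a 1) := by rw [h2, mul_one]
  _ = (a * b) * invOfUnit a 1 := by ring
  _ = invOfUnit a 1 := by rw [h, one_mul]

lemma map_invOfUnit' (f : R →+* S) (a : R⟦X⟧) (ha : constantCoeff a = 1) :
    PowerSeries.map f (invOfUnit a 1) = invOfUnit (PowerSeries.map f a) 1 := by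
  apply invOfUnit_unique
  · rw [← coeff_zero_eq_constantCoeff_apply, coeff_map,
      coeff_zero_eq_constantCoeff_apply, ha, map_one]
  · rw [← map_mul, mul_invOfUnit a 1 (by simpa using ha), map_one]

lemma invOfUnit_invOfUnit (a : R⟦X⟧) (ha : constantCoeff a = 1) :
    invOfUnit (invOfUnit a 1) 1 = a := by
  symm
  apply invOfUnit_unique
  · simp
  · exact invOfUnit_mul a 1 (by simpa using ha)

lemma coeff_invOfUnit_congr {a b : R⟦X⟧} (N : ℕ)
    (hab : ∀ j ≤ N, coeff j a = coeff j b) :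
    ∀ j ≤ N, coeff j (invOfUnit a 1) = coeff j (invOfUnit b 1) := by
  intro j
  induction j using Nat.strong_induction_on with
  | _ j ih =>
    intro hj
    rw [coeff_invOfUnit, coeff_invOfUnit]
    by_cases hj0 : j = 0
    · simp [hj0]
    · rw [if_neg hj0, if_neg hj0]
      congr 1
      apply Finset.sum_congr rfl
      intro x hx
      rw [Finset.HasAntidiagonal.mem_antidiagonal] at hx
      by_cases h2 : x.2 < j
      · rw [if_pos h2, if_pos h2, hab x.1 (by omega), ih x.2 h2 (by omega)]
      · rw [if_neg h2, if_neg h2]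

lemma invOfUnit_coeff_vanish (f : R →+* S) (a : R⟦X⟧) (d K : ℕ)
    (hd : ∀ i, d < i → coeff i a = 0)
    (hgen : ∀ j, K < j → j ≤ K + d → f (coeff j (invOfUnit a 1)) = 0) :
    ∀ j, K < j → f (coeff j (invOfUnit a 1)) = 0 := by
  intro j
  induction j using Nat.strong_induction_on with
  | _ j ih =>
    intro hj
    by_cases hjn : j ≤ K + d
    · exact hgen j hj hjn
    · rw [coeff_invOfUnit, if_neg (by omega : j ≠ 0)]
      have h1 : ((((1 : Rˣ)⁻¹ : Rˣ) : R)) = 1 := by simp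
      rw [h1, neg_one_mul, map_neg, map_sum, neg_eq_zero]
      apply Finset.sum_eq_zero
      intro x hx
      rw [Finset.HasAntidiagonal.mem_antidiagonal] at hx
      by_cases h2 : x.2 < j
      · rw [if_pos h2]
        by_cases hx1 : d < x.1
        · rw [hd x.1 hx1, zero_mul, map_zero]
        · rw [map_mul, ih x.2 h2 (by omega), mul_zero]
      · rw [if_neg h2, map_zero]

/-! ### Constant coefficients -/

lemma constCoeff_fSeries (k : ℕ) : constantCoeff (fSeries k) = 1 := by
  rw [← coeff_zero_eq_constantCoeff_apply]
  simp [fSeries, coeff_mk]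

lemma constCoeff_sigmaSeries (m : ℕ) : constantCoeff (sigmaSeries m) = 1 := by
  rw [← coeff_zero_eq_constantCoeff_apply]
  simp [sigmaSeries, coeff_mk]

lemma coeff_zero_ESeries (k : ℕ) : coeff 0 (ESeries k) = 1 := by
  rw [ESeries, coeff_zero_eq_constantCoeff_apply, constantCoeff_invOfUnit]
  simp

lemma constCoeff_ETrunc (k : ℕ) : constantCoeff (ETrunc k) = 1 := by
  rw [← coeff_zero_eq_constantCoeff_apply, ETrunc, coeff_mk, if_pos (Nat.zero_le k),
    coeff_zero_ESeries]

lemma coeff_ETrunc (k j : ℕ) :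
    coeff j (ETrunc k) = if j ≤ k then coeff j (ESeries k) else 0 := by
  rw [ETrunc, coeff_mk]

lemma deltaPoly_zero (k : ℕ) : deltaPoly k 0 = 1 := by
  rw [deltaPoly, coeff_zero_eq_constantCoeff_apply, constantCoeff_invOfUnit]
  simp

/-- For `h ≤ k`, `δ_h` is just the `h`-th coefficient of `fSeries`. -/
lemma deltaPoly_le (k h : ℕ) (hh : h ≤ k) : deltaPoly k h = coeff h (fSeries k) := by
  rw [deltaPoly]
  have e1 : ∀ j ≤ k, coeff j (ETrunc k) = coeff j (ESeries k) := by
    intro j hj; rw [coeff_ETrunc, if_pos hj]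
  have e2 := coeff_invOfUnit_congr k e1 h hh
  rw [e2, ESeries, invOfUnit_invOfUnit _ (constCoeff_fSeries k)]

/-! ### The two ideals and ring maps -/

def Il (k n : ℕ) : Ideal (MvPolynomial (Fin k) ℤ) :=
  Ideal.span {ψ | ∃ h, n - k + 1 ≤ h ∧ h ≤ n ∧ ψ = deltaPoly k h}

def Ir (k n : ℕ) : Ideal (MvPolynomial (Fin (n - k)) ℤ) :=
  Ideal.span {ψ | ∃ i, k + 1 ≤ i ∧ i ≤ n ∧ ψ = Ypoly (n - k) i}

def φh (k n : ℕ) : MvPolynomial (Fin (n - k)) ℤ →+* MvPolynomial (Fin k) ℤ :=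
  MvPolynomial.eval₂Hom (Int.castRingHom _) fun i => deltaPoly k ((i : ℕ) + 1)

def ψh (k n : ℕ) : MvPolynomial (Fin k) ℤ →+* MvPolynomial (Fin (n - k)) ℤ :=
  MvPolynomial.eval₂Hom (Int.castRingHom _) fun j =>
    if hj : (j : ℕ) + 1 ≤ n - k then MvPolynomial.X ⟨(j : ℕ), by omega⟩ else 0

/-! ### Vanishing of coefficients in the quotients -/

lemma vanish_right (k n : ℕ) (hkn : k ≤ n) (j : ℕ) (hj : k < j) :
    Ideal.Quotient.mk (Ir k n) (coeff j (invOfUnit (sigmaSeries (n - k)) 1)) = 0 := by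
  refine invOfUnit_coeff_vanish (Ideal.Quotient.mk (Ir k n)) (sigmaSeries (n - k))
    (n - k) k ?_ ?_ j hj
  · intro i hi
    rw [sigmaSeries, coeff_mk, dif_neg (by omega), if_neg (by omega)]
  · intro j hj1 hj2
    have hY : Ypoly (n - k) j ∈ Ir k n :=
      Ideal.subset_span ⟨j, by omega, by omega, rfl⟩
    have hc : coeff j (invOfUnit (sigmaSeries (n - k)) 1) = (-1) ^ j * Ypoly (n - k) j := by
      rw [Ypoly, ← mul_assoc, ← pow_add, Even.neg_one_pow ⟨j, rfl⟩, one_mul]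
    rw [hc, map_mul, Ideal.Quotient.eq_zero_iff_mem.mpr hY, mul_zero]

lemma vanish_left (k n : ℕ) (hkn : k ≤ n) (h : ℕ) (hh : n - k < h) :
    Ideal.Quotient.mk (Il k n) (deltaPoly k h) = 0 := by
  refine invOfUnit_coeff_vanish (Ideal.Quotient.mk (Il k n)) (ETrunc k) k (n - k) ?_ ?_ h hh
  · intro i hi
    rw [coeff_ETrunc, if_neg (by omega)]
  · intro j hj1 hj2
    have hD : deltaPoly k j ∈ Il k n :=
      Ideal.subset_span ⟨j, by omega, by omega, rfl⟩
    exact Ideal.Quotient.eq_zero_iff_mem.mpr hD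

/-! ### The main power series identities -/

lemma L1 (k n : ℕ) (hkn : k ≤ n) :
    PowerSeries.map ((Ideal.Quotient.mk (Ir k n)).comp (ψh k n))
        (invOfUnit (ETrunc k) 1) =
      PowerSeries.map (Ideal.Quotient.mk (Ir k n)) (sigmaSeries (n - k)) := by
  set mkB := Ideal.Quotient.mk (Ir k n)
  set g := mkB.comp (ψh k n) with hg
  -- Step 1: coefficients of `map g (fSeries k)` agree with those of
  -- `map mkB (sigmaSeries (n-k))` up to degree `k`, and vanish above `k`.
  have step1 : ∀ j ≤ k, coeff j (PowerSeries.map g (fSeries k)) =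
      coeff j (PowerSeries.map mkB (sigmaSeries (n - k))) := by
    intro j hj
    rw [coeff_map, coeff_map, fSeries, coeff_mk, sigmaSeries, coeff_mk]
    rcases Nat.eq_zero_or_pos j with h0 | h0
    · subst h0; simp
    · rw [dif_pos ⟨h0, hj⟩]
      by_cases hm : j ≤ n - k
      · rw [dif_pos ⟨h0, hm⟩, hg, RingHom.comp_apply, ψh, MvPolynomial.eval₂Hom_X',
          dif_pos (by omega : j - 1 + 1 ≤ n - k)]
      · rw [dif_neg (by omega), if_neg (by omega), map_zero, hg, RingHom.comp_apply,
          ψh, MvPolynomial.eval₂Hom_X', dif_neg (by omega : ¬(j - 1 + 1 ≤ n - k)), map_zero]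
  -- Step 2: `map g (ETrunc k) = map mkB (invOfUnit (sigmaSeries (n-k)) 1)`.
  have cF : constantCoeff (PowerSeries.map g (fSeries k)) = 1 := by
    rw [← coeff_zero_eq_constantCoeff_apply, coeff_map, coeff_zero_eq_constantCoeff_apply,
      constCoeff_fSeries, map_one]
  have step2 : PowerSeries.map g (ETrunc k) =
      PowerSeries.map mkB (invOfUnit (sigmaSeries (n - k)) 1) := by
    ext j
    rw [coeff_map, coeff_map, coeff_ETrunc]
    by_cases hj : j ≤ k
    · rw [if_pos hj, ← coeff_map, ESeries,
        map_invOfUnit' g _ (constCoeff_fSeries k),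
        coeff_invOfUnit_congr k step1 j hj, ← map_invOfUnit' mkB _ (constCoeff_sigmaSeries _),
        coeff_map]
    · rw [if_neg hj, map_zero]
      exact (vanish_right k n hkn j (by omega)).symm
  -- Step 3: conclude.
  rw [map_invOfUnit' g _ (constCoeff_ETrunc k), step2,
    map_invOfUnit' mkB _ (constCoeff_sigmaSeries (n - k)),
    invOfUnit_invOfUnit]
  rw [← coeff_zero_eq_constantCoeff_apply, coeff_map, coeff_zero_eq_constantCoeff_apply,
    constCoeff_sigmaSeries, map_one]

lemma L1c (k n : ℕ) (hkn : k ≤ n) (h : ℕ) :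
    Ideal.Quotient.mk (Ir k n) (ψh k n (deltaPoly k h)) =
      Ideal.Quotient.mk (Ir k n) (coeff h (sigmaSeries (n - k))) := by
  have := congrArg (coeff h) (L1 k n hkn)
  rwa [coeff_map, coeff_map, RingHom.comp_apply] at this

lemma L2 (k n : ℕ) (hk : 1 ≤ k) (hkn : k ≤ n) :
    PowerSeries.map ((Ideal.Quotient.mk (Il k n)).comp (φh k n))
        (invOfUnit (sigmaSeries (n - k)) 1) =
      PowerSeries.map (Ideal.Quotient.mk (Il k n)) (ETrunc k) := by
  set mkA := Ideal.Quotient.mk (Il k n)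
  set g := mkA.comp (φh k n) with hg
  have stepA : PowerSeries.map g (sigmaSeries (n - k)) =
      PowerSeries.map mkA (invOfUnit (ETrunc k) 1) := by
    ext h
    rw [coeff_map, coeff_map, sigmaSeries, coeff_mk]
    rcases Nat.eq_zero_or_pos h with h0 | h0
    · subst h0
      have : coeff 0 (invOfUnit (ETrunc k) 1) = deltaPoly k 0 := rfl
      rw [this, deltaPoly_zero]
      simp
    · by_cases hm : h ≤ n - k
      · rw [dif_pos ⟨h0, hm⟩, hg, RingHom.comp_apply, φh, MvPolynomial.eval₂Hom_X']
        have : h - 1 + 1 = h := by omega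
        rw [this]
        rfl
      · rw [dif_neg (by omega), if_neg (by omega), map_zero]
        exact (vanish_left k n hkn h (by omega)).symm
  have cT : constantCoeff (PowerSeries.map mkA (ETrunc k)) = 1 := by
    rw [← coeff_zero_eq_constantCoeff_apply, coeff_map, coeff_zero_eq_constantCoeff_apply,
      constCoeff_ETrunc, map_one]
  rw [map_invOfUnit' g _ (constCoeff_sigmaSeries (n - k)), stepA,
    map_invOfUnit' mkA _ (constCoeff_ETrunc k), invOfUnit_invOfUnit _ cT]

lemma L2c (k n : ℕ) (hk : 1 ≤ k) (hkn : k ≤ n) (i : ℕ) :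
    Ideal.Quotient.mk (Il k n) (φh k n (coeff i (invOfUnit (sigmaSeries (n - k)) 1))) =
      Ideal.Quotient.mk (Il k n) (coeff i (ETrunc k)) := by
  have := congrArg (coeff i) (L2 k n hk hkn)
  rwa [coeff_map, coeff_map, RingHom.comp_apply] at this

/-! ### The induced maps on the quotients -/

lemma wd_Phi (k n : ℕ) (hk : 1 ≤ k) (hkn : k ≤ n) :
    ∀ a ∈ Ir k n, ((Ideal.Quotient.mk (Il k n)).comp (φh k n)) a = 0 := by
  have hle : Ir k n ≤ RingHom.ker ((Ideal.Quotient.mk (Il k n)).comp (φh k n)) := by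
    rw [Ir, Ideal.span_le]
    rintro ψ ⟨i, hi1, hi2, rfl⟩
    rw [SetLike.mem_coe, RingHom.mem_ker, RingHom.comp_apply, Ypoly, map_mul, map_mul]
    have : Ideal.Quotient.mk (Il k n)
        (φh k n (coeff i (invOfUnit (sigmaSeries (n - k)) 1))) = 0 := by
      rw [L2c k n hk hkn i, coeff_ETrunc, if_neg (by omega), map_zero]
    rw [this, mul_zero]
  intro a ha
  exact hle ha

lemma wd_Psi (k n : ℕ) (hk : 1 ≤ k) (hkn : k ≤ n) :
    ∀ a ∈ Il k n, ((Ideal.Quotient.mk (Ir k n)).comp (ψh k n)) a = 0 := by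
  have hle : Il k n ≤ RingHom.ker ((Ideal.Quotient.mk (Ir k n)).comp (ψh k n)) := by
    rw [Il, Ideal.span_le]
    rintro ψ ⟨h, hh1, hh2, rfl⟩
    rw [SetLike.mem_coe, RingHom.mem_ker, RingHom.comp_apply, L1c k n hkn h,
      sigmaSeries, coeff_mk, dif_neg (by omega), if_neg (by omega), map_zero]
  intro a ha
  exact hle ha

def Phi (k n : ℕ) (hk : 1 ≤ k) (hkn : k ≤ n) :
    (MvPolynomial (Fin (n - k)) ℤ ⧸ Ir k n) →+* (MvPolynomial (Fin k) ℤ ⧸ Il k n) :=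
  Ideal.Quotient.lift (Ir k n) ((Ideal.Quotient.mk (Il k n)).comp (φh k n)) (wd_Phi k n hk hkn)

def Psi (k n : ℕ) (hk : 1 ≤ k) (hkn : k ≤ n) :
    (MvPolynomial (Fin k) ℤ ⧸ Il k n) →+* (MvPolynomial (Fin (n - k)) ℤ ⧸ Ir k n) :=
  Ideal.Quotient.lift (Il k n) ((Ideal.Quotient.mk (Ir k n)).comp (ψh k n)) (wd_Psi k n hk hkn)

lemma Psi_mk (k n : ℕ) (hk : 1 ≤ k) (hkn : k ≤ n) (a : MvPolynomial (Fin k) ℤ) :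
    Psi k n hk hkn (Ideal.Quotient.mk (Il k n) a) =
      Ideal.Quotient.mk (Ir k n) (ψh k n a) :=
  Ideal.Quotient.lift_mk _ _ _

lemma Phi_mk (k n : ℕ) (hk : 1 ≤ k) (hkn : k ≤ n) (a : MvPolynomial (Fin (n - k)) ℤ) :
    Phi k n hk hkn (Ideal.Quotient.mk (Ir k n) a) =
      Ideal.Quotient.mk (Il k n) (φh k n a) :=
  Ideal.Quotient.lift_mk _ _ _

lemma comp_PhiPsi (k n : ℕ) (hk : 1 ≤ k) (hkn : k ≤ n) :
    (Phi k n hk hkn).comp (Psi k n hk hkn) = RingHom.id _ := by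
  apply Ideal.Quotient.ringHom_ext
  apply MvPolynomial.ringHom_ext
  · intro r
    exact RingHom.congr_fun (RingHom.ext_int
      (((Phi k n hk hkn).comp (Psi k n hk hkn)).comp
          ((Ideal.Quotient.mk (Il k n)).comp MvPolynomial.C))
      ((RingHom.id _).comp ((Ideal.Quotient.mk (Il k n)).comp MvPolynomial.C))) r
  · intro j
    simp only [RingHom.comp_apply, RingHom.id_apply]
    rw [Psi_mk, ψh, MvPolynomial.eval₂Hom_X']
    by_cases hj : (j : ℕ) + 1 ≤ n - k
    · rw [dif_pos hj, Phi_mk, φh, MvPolynomial.eval₂Hom_X']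
      have : deltaPoly k ((j : ℕ) + 1) = MvPolynomial.X j := by
        rw [deltaPoly_le k _ (by omega), fSeries, coeff_mk, dif_pos ⟨by omega, by omega⟩]
        exact congrArg MvPolynomial.X (Fin.ext (by simp))
      rw [this]
    · rw [dif_neg hj, map_zero, map_zero]
      have hXj : MvPolynomial.X j = deltaPoly k ((j : ℕ) + 1) := by
        rw [deltaPoly_le k _ (by omega), fSeries, coeff_mk, dif_pos ⟨by omega, by omega⟩]
        exact congrArg MvPolynomial.X (Fin.ext (by simp)).symm
      rw [hXj]
      exact (vanish_left k n hkn _ (by omega)).symm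

lemma comp_PsiPhi (k n : ℕ) (hk : 1 ≤ k) (hkn : k ≤ n) :
    (Psi k n hk hkn).comp (Phi k n hk hkn) = RingHom.id _ := by
  apply Ideal.Quotient.ringHom_ext
  apply MvPolynomial.ringHom_ext
  · intro r
    exact RingHom.congr_fun (RingHom.ext_int
      (((Psi k n hk hkn).comp (Phi k n hk hkn)).comp
          ((Ideal.Quotient.mk (Ir k n)).comp MvPolynomial.C))
      ((RingHom.id _).comp ((Ideal.Quotient.mk (Ir k n)).comp MvPolynomial.C))) r
  · intro i
    simp only [RingHom.comp_apply, RingHom.id_apply]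
    rw [Phi_mk, φh, MvPolynomial.eval₂Hom_X', Psi_mk, L1c k n hkn, sigmaSeries, coeff_mk,
      dif_pos ⟨by omega, by omega⟩]
    exact congrArg _ (congrArg MvPolynomial.X (Fin.ext (by simp)))

end Aux16


/-- `ℤ[D₁,…,D_k]/(D_{n-k+1},…,D_n) ≅ ℤ[σ₁,…,σ_{n-k}]/(Y_{k+1},…,Y_n)`,
the isomorphism matching `σ_i` with `D_i` (i.e. the class of the `i`-th variable on the
right corresponds to the class of the polynomial expression `δ i` of `D_i` on the left);
the right-hand side is the standard presentation of the Chow ring of `G_k(n)`. -/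
theorem intersection_ring_iso_chow_ring (k n : ℕ) (hk : 1 ≤ k) (hkn : k ≤ n) :
    ∃ e : (MvPolynomial (Fin k) ℤ ⧸
            Ideal.span {ψ | ∃ h, n - k + 1 ≤ h ∧ h ≤ n ∧ ψ = deltaPoly k h}) ≃+*
          (MvPolynomial (Fin (n - k)) ℤ ⧸
            Ideal.span {ψ | ∃ i, k + 1 ≤ i ∧ i ≤ n ∧ ψ = Ypoly (n - k) i}),
      ∀ i : Fin (n - k),
        e (Ideal.Quotient.mk _ (deltaPoly k ((i : ℕ) + 1))) =
          Ideal.Quotient.mk _ (MvPolynomial.X i) := by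
  refine ⟨RingEquiv.ofRingHom (Aux16.Psi k n hk hkn) (Aux16.Phi k n hk hkn)
    (Aux16.comp_PsiPhi k n hk hkn) (Aux16.comp_PhiPsi k n hk hkn), ?_⟩
  intro i
  show Aux16.Psi k n hk hkn (Ideal.Quotient.mk (Aux16.Il k n) (deltaPoly k ((i : ℕ) + 1))) =
    Ideal.Quotient.mk (Aux16.Ir k n) (MvPolynomial.X i)
  rw [Aux16.Psi_mk, Aux16.L1c k n hkn, sigmaSeries, PowerSeries.coeff_mk,
    dif_pos ⟨by omega, by omega⟩]
  exact congrArg _ (congrArg MvPolynomial.X (Fin.ext (by simp)))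

end
end

section
/- Let M[D_n] be M regarded as a free module of rank n over ℤ[D_n] with basis ε^1, …, ε^n. The intersection ring of the pair (M[D_n], D_t) is ℤ[D_n][D₁]/(D₁^n − D_n); renaming D_n = q this is ℤ[q][D₁]/(D₁^n − q), the small quantum cohomology ring of ℙ^{n−1}. -/
noncomputable section

/-- The shift endomorphism `D₁` with `D₁(ε^i) = ε^{i+1}`, so `D_i = D₁^i`. -/
def D1 : Module.End ℤ Mmod := Finsupp.lmapDomain ℤ ℤ (· + 1)

/-- Evaluation of a two-variable polynomial `φ ∈ ℤ[q][D₁]` (variable `0` standing for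
`q = D_n` and variable `1` for `D₁`) on `ε^1 ∈ M[D_n]`. -/
def evalQ1 (n : ℕ) (φ : MvPolynomial (Fin 2) ℤ) : Mmod :=
  (∑ m ∈ φ.support, MvPolynomial.coeff m φ •
    ((D1 ^ n) ^ (m 0) * D1 ^ (m 1))) (ee 1)

open MvPolynomial

/-- The evaluation `ℤ[q, D₁] → ℤ[x]` sending `q ↦ x^n`, `D₁ ↦ x`, which realizes
`evalQ1` after identifying `M` with `ℤ[x]` via `ε^{k+1} ↦ x^k`. -/
def tauu (n : ℕ) : MvPolynomial (Fin 2) ℤ →ₐ[ℤ] Polynomial ℤ :=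
  aeval ![Polynomial.X ^ n, Polynomial.X]

lemma tauu_X0 (n : ℕ) : tauu n (X 0) = Polynomial.X ^ n := by simp [tauu]
lemma tauu_X1 (n : ℕ) : tauu n (X 1) = Polynomial.X := by simp [tauu]

lemma D1_pow_single (k j : ℕ) : (D1 ^ k) (Finsupp.single j 1) = Finsupp.single (j + k) 1 := by
  induction k with
  | zero => simp
  | succ k ih =>
    rw [pow_succ', Module.End.mul_apply, ih]
    have h : ∀ a : ℕ, D1 (Finsupp.single a (1:ℤ)) = Finsupp.single (a+1) 1 := by
      intro a; simp [D1, Finsupp.mapDomain_single]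
    rw [h, ← add_assoc]

lemma evalQ1_eq (n : ℕ) (φ : MvPolynomial (Fin 2) ℤ) :
    evalQ1 n φ = (tauu n φ).toFinsupp.coeff := by
  unfold evalQ1
  rw [LinearMap.sum_apply]
  have lhs : ∀ m : Fin 2 →₀ ℕ,
      (MvPolynomial.coeff m φ • ((D1 ^ n) ^ (m 0) * D1 ^ (m 1))) (ee 1)
        = Finsupp.single (n * m 0 + m 1) (MvPolynomial.coeff m φ) := by
    intro m
    rw [LinearMap.smul_apply, ← pow_mul, ← pow_add]
    show MvPolynomial.coeff m φ • (D1 ^ (n * m 0 + m 1)) (Finsupp.single 0 1) = _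
    rw [D1_pow_single, zero_add, Finsupp.smul_single, smul_eq_mul, mul_one]
  rw [Finset.sum_congr rfl fun m _ => lhs m]
  conv_rhs => rw [φ.as_sum, map_sum]
  rw [Polynomial.toFinsupp_sum, AddMonoidAlgebra.coeff_sum]
  refine Finset.sum_congr rfl fun m _ => ?_
  rw [tauu, aeval_monomial, Finsupp.prod_pow, Fin.prod_univ_two]
  simp only [Matrix.cons_val_zero, Matrix.cons_val_one, Matrix.head_cons]
  rw [← pow_mul, ← pow_add]
  show _ = ((Polynomial.C (MvPolynomial.coeff m φ)) * Polynomial.X ^ (n * m 0 + m 1)).toFinsupp.coeff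
  rw [Polynomial.C_mul_X_pow_eq_monomial, Polynomial.toFinsupp_monomial, AddMonoidAlgebra.coeff_single]

/-- Substitution `q ↦ D₁^n`, realized as a composite through `ℤ[x]`. -/
def sigma (n : ℕ) (φ : MvPolynomial (Fin 2) ℤ) : MvPolynomial (Fin 2) ℤ :=
  Polynomial.aeval (X 1 : MvPolynomial (Fin 2) ℤ) (tauu n φ)

lemma sub_sigma_mem (n : ℕ) (φ : MvPolynomial (Fin 2) ℤ) :
    φ - sigma n φ ∈ Ideal.span {(X 1 : MvPolynomial (Fin 2) ℤ) ^ n - X 0} := by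
  set I := Ideal.span {(X 1 : MvPolynomial (Fin 2) ℤ) ^ n - X 0} with hI
  have hσ : ∀ ψ χ : MvPolynomial (Fin 2) ℤ, sigma n (ψ * χ) = sigma n ψ * sigma n χ := by
    intro ψ χ; unfold sigma; rw [map_mul, map_mul]
  have hX : ∀ i : Fin 2, X i - sigma n (X i) ∈ I := by
    intro i
    fin_cases i
    · show (X 0 : MvPolynomial (Fin 2) ℤ) - sigma n (X 0) ∈ I
      unfold sigma
      rw [tauu_X0]
      simp only [map_pow, Polynomial.aeval_X]
      have : (X 0 : MvPolynomial (Fin 2) ℤ) - X 1 ^ n = -(X 1 ^ n - X 0) := by ring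
      rw [this]
      exact neg_mem (Ideal.subset_span rfl)
    · show (X 1 : MvPolynomial (Fin 2) ℤ) - sigma n (X 1) ∈ I
      unfold sigma
      rw [tauu_X1, Polynomial.aeval_X, sub_self]
      exact zero_mem I
  induction φ using MvPolynomial.induction_on with
  | C a =>
      have : sigma n (C a) = C a := by
        unfold sigma
        rw [show (C a : MvPolynomial (Fin 2) ℤ) = algebraMap ℤ _ a from rfl, AlgHom.commutes,
          AlgHom.commutes]
      rw [this, sub_self]; exact zero_mem I
  | add p q hp hq =>
      have : sigma n (p + q) = sigma n p + sigma n q := by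
        unfold sigma; rw [map_add, map_add]
      rw [this]
      have : p + q - (sigma n p + sigma n q) = (p - sigma n p) + (q - sigma n q) := by ring
      rw [this]; exact add_mem hp hq
  | mul_X p i hp =>
      rw [hσ]
      have : p * X i - sigma n p * sigma n (X i)
          = (p - sigma n p) * X i + sigma n p * (X i - sigma n (X i)) := by ring
      rw [this]
      exact add_mem (Ideal.mul_mem_right _ _ hp) (Ideal.mul_mem_left _ _ (hX i))

/-- the intersection ring of `(M[D_n], D_t)` is
`ℤ[D_n][D₁]/(D₁^n − D_n) = ℤ[q][D₁]/(D₁^n − q)` (the small quantum cohomology ring of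
`ℙ^{n-1}`): the evaluation `ℤ[q][D₁] → M`, `P(q, D₁) ↦ P(D_n, D₁)·ε^1`, is surjective
with kernel exactly the ideal generated by `D₁^n − q`. -/
theorem intersection_ring_of_quantum_projective_space (n : ℕ) (hn : 1 ≤ n) :
    Function.Surjective (evalQ1 n) ∧
    (∀ φ : MvPolynomial (Fin 2) ℤ,
        evalQ1 n φ = 0 ↔
          φ ∈ Ideal.span {MvPolynomial.X 1 ^ n - MvPolynomial.X 0}) := by
  constructor
  · intro v
    refine ⟨Polynomial.aeval (X 1 : MvPolynomial (Fin 2) ℤ) (⟨AddMonoidAlgebra.ofCoeff v⟩ : Polynomial ℤ), ?_⟩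
    rw [evalQ1_eq]
    have : tauu n (Polynomial.aeval (X 1 : MvPolynomial (Fin 2) ℤ) (⟨AddMonoidAlgebra.ofCoeff v⟩ : Polynomial ℤ))
        = Polynomial.aeval (tauu n (X 1)) (⟨AddMonoidAlgebra.ofCoeff v⟩ : Polynomial ℤ) :=
      (Polynomial.aeval_algHom_apply (tauu n) (X 1) _).symm
    rw [this, tauu_X1, Polynomial.aeval_X_left_apply]
  · intro φ
    rw [evalQ1_eq]
    have hz : (tauu n φ).toFinsupp.coeff = 0 ↔ tauu n φ = 0 := by
      constructor
      · intro h; exact Polynomial.toFinsupp_injective (by simpa using h)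
      · intro h; rw [h]; rfl
    rw [hz]
    constructor
    · intro h
      have := sub_sigma_mem n φ
      rwa [show sigma n φ = 0 by unfold sigma; rw [h, map_zero], sub_zero] at this
    · intro h
      rcases Ideal.mem_span_singleton'.mp h with ⟨a, ha⟩
      rw [← ha, map_mul, map_sub, map_pow, tauu_X1, tauu_X0, sub_self, mul_zero]

end
end
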